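/- Assume β > 3 and α = 1/β. For every w ∈ L^{α,β}, the word w̃ obtained by applying the hat operation twice belongs to L^{α,β} and satisfies s(w̃) = ε (equivalently, k1(w̃) = k2(w̃) = 0). -/

import Mathlib

open Filter Topology MeasureTheory ENNReal
open scoped Classical

noncomputable section

namespace AB

/-- The (α,β)-transformation `T(x) = βx + α − ⌊βx + α⌋`. -/
def T (α β : ℝ) (x : ℝ) : ℝ := β * x + α - ⌊β * x + α⌋

/-- `λ = ⌈α+β⌉ − 1`, as a natural number. -/
def lamNat (α β : ℝ) : ℕ := (⌈α + β⌉ - 1).toNat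

/-- The digit of `x ∈ [0,1)`: the index `k` with `x ∈ J_k`, namely `⌊βx + α⌋`. -/
def digit (α β : ℝ) (x : ℝ) : ℕ := (⌊β * x + α⌋).toNat

/-- The (α,β)-expansion of `x`. -/
def iSeq (α β : ℝ) (x : ℝ) : ℕ → ℕ := fun n => digit α β ((T α β)^[n] x)

/-- The one-sided (α,β)-shift: closure (in the product topology) of the set of expansions. -/
def Xab (α β : ℝ) : Set (ℕ → ℕ) :=
  closure {s | ∃ x ∈ Set.Ico (0 : ℝ) 1, s = iSeq α β x}

/-- Word of given length read in a one-sided sequence starting at position `k`. -/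
def wordN (s : ℕ → ℕ) (k len : ℕ) : List ℕ := (List.range len).map fun i => s (k + i)

/-- The language of the (α,β)-shift: finite words appearing in points of `Xab`. -/
def Lang (α β : ℝ) : Set (List ℕ) :=
  {w | ∃ s ∈ Xab α β, ∃ k : ℕ, w = wordN s k w.length}

/-- `a = i_{α,β}(0)`. -/
def aSeq (α β : ℝ) : ℕ → ℕ := iSeq α β 0

/-- The prefix of length `l` of a sequence, as a word. -/
def pre (s : ℕ → ℕ) (l : ℕ) : List ℕ := (List.range l).map s

/-- Lexicographic (non-strict) order on words. -/
def wordLe (u v : List ℕ) : Prop := u = v ∨ List.Lex (· < ·) u v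

/-- Lexicographic (non-strict) order on one-sided sequences. -/
def seqLe (x y : ℕ → ℕ) : Prop :=
  x = y ∨ ∃ n : ℕ, (∀ i < n, x i = y i) ∧ x n < y n

/-- The largest `k ≤ |w|` such that the length-`k` suffix of `w` equals the length-`k`
prefix of `s` (this is `k1` for `s = a` and `k2` for `s = b`). -/
def kk (s : ℕ → ℕ) (w : List ℕ) : ℕ :=
  Nat.findGreatest (fun k => w.drop (w.length - k) = pre s k) w.length

/-- The set of finite prefixes of a sequence (`P^a`, `P^b`). -/
def Pset (s : ℕ → ℕ) : Set (List ℕ) := {u | ∃ l : ℕ, u = pre s l}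

/-- The distinguished suffix `s(w)`. -/
def sWord (a b : ℕ → ℕ) (w : List ℕ) : List ℕ :=
  if kk b w < kk a w then w.drop (w.length - kk a w)
  else if kk a w < kk b w then w.drop (w.length - kk b w)
  else []

/-- The hat operation on `P = P^a ∪ P^b` (for `β > 3`, `α = 1/β`). -/
def hatP (a b : ℕ → ℕ) (lam : ℕ) (u : List ℕ) : List ℕ :=
  if u = [] then []
  else if u ∈ Pset a then u.dropLast ++ [u.getLast?.getD 0 + 1]
  else if 3 ≤ u.getLast?.getD 0 then u.dropLast ++ [u.getLast?.getD 0 - 1]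
  else
    (u.set (u.length - kk a u.dropLast - 2) (u.getD (u.length - kk a u.dropLast - 2) 0 - 1)).set
      (u.length - kk a u.dropLast - 1) (lam - 1)

/-- `ŵ` for `w = v·s(w)`: replace the distinguished suffix by its hat. -/
def hatW (a b : ℕ → ℕ) (lam : ℕ) (w : List ℕ) : List ℕ :=
  w.take (w.length - (sWord a b w).length) ++ hatP a b lam (sWord a b w)

/-- `w̃`: the hat operation applied twice. -/
def tildeW (a b : ℕ → ℕ) (lam : ℕ) (w : List ℕ) : List ℕ :=
  hatW a b lam (hatW a b lam w)

/-- `z(u)` for `u ∈ P^b`. -/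
def zP (a b : ℕ → ℕ) (u : List ℕ) : ℕ :=
  if u = [] then 0
  else sSup ({k : ℕ | (u ++ pre (fun i => a (kk a u + i)) k) ∈ Pset b} ∪ {0})

/-- `z(w)` for a word `w` in the language. -/
def zW (a b : ℕ → ℕ) (w : List ℕ) : ℕ :=
  if kk a w < kk b w then zP a b (w.drop (w.length - kk b w)) else 0

/-- `z̄(n) = max{z(u) : u prefix of b, |u| ≤ n}`. -/
def zbar (a b : ℕ → ℕ) (n : ℕ) : ℕ :=
  (Finset.range (n + 1)).sup fun l => zP a b (pre b l)

/-- The natural extension `Σ^{α,β}`. -/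
def SigmaAB (α β : ℝ) : Set (ℤ → ℕ) :=
  {x | ∀ k : ℤ, (fun n : ℕ => x (k + n)) ∈ Xab α β}

/-- `σ^j` on two-sided sequences. -/
def shiftI {A : Type*} (j : ℤ) (x : ℤ → A) : ℤ → A := fun n => x (n + j)

/-- Word of given length read in a two-sided sequence starting at position `k`. -/
def wordZ (x : ℤ → ℕ) (k : ℤ) (len : ℕ) : List ℕ := (List.range len).map fun i => x (k + i)

/-- The map `g : L^{α,β} → {0,1}`. -/
def gW (a b : ℕ → ℕ) (w : List ℕ) : ℕ :=
  if kk a w = 0 ∧ 0 < kk b w ∧ b (kk b w) ≤ 1 then 0 else 1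

/-- `w^♯`: the word `w` placed at positions `k,…,k+|w|−1`, followed by `g(w)` at
position `k+|w|`, and `1` at all other positions. -/
def wSharp (a b : ℕ → ℕ) (k : ℤ) (w : List ℕ) : ℤ → ℕ :=
  fun j => if k ≤ j ∧ j < k + w.length then w.getD (j - k).toNat 1
           else if j = k + w.length then gW a b w else 1

/-- The finite approximation sets `E^n ⊆ Σ^{α,β}`. -/
def En (α β : ℝ) (b : ℕ → ℕ) (n : ℕ) : Set (ℤ → ℕ) :=
  {x | wordZ x (-(n : ℤ)) (2 * n + 1) ∈ Lang α β ∧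
       x ((n : ℤ) + 1) = gW (aSeq α β) b (wordZ x (-(n : ℤ)) (2 * n + 1)) ∧
       ∀ j : ℤ, j < -(n : ℤ) ∨ (n : ℤ) + 1 < j → x j = 1}

/-- `s(x_k^-) = ε` for the left-infinite word `x_{(-∞,k-1]}`: no nonempty suffix of it is a
prefix of `a` or of `b`. -/
def leftStar (a b : ℕ → ℕ) (x : ℤ → ℕ) (k : ℤ) : Prop :=
  (∀ K : ℕ, 1 ≤ K → ¬ ∀ i : ℕ, i < K → x (k - K + i) = a i) ∧
  (∀ K : ℕ, 1 ≤ K → ¬ ∀ i : ℕ, i < K → x (k - K + i) = b i)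

/-- `E^n_{[k,l]}(v)`. -/
def EnCyl (α β : ℝ) (b : ℕ → ℕ) (n : ℕ) (k l : ℤ) (v : List ℕ) : Set (ℤ → ℕ) :=
  {x ∈ En α β b n | wordZ x k (l - k + 1).toNat = v}

/-- `E^{*,n}_{[k,l]}(v)`. -/
def EnCylStar (α β : ℝ) (b : ℕ → ℕ) (n : ℕ) (k l : ℤ) (v : List ℕ) : Set (ℤ → ℕ) :=
  {x ∈ EnCyl α β b n k l v | leftStar (aSeq α β) b x k}

/-- The Birkhoff sum `∑_{j=−n}^{n} φ(σ^j x)`. -/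
def birkhoff (φ : (ℤ → ℕ) → ℝ) (n : ℕ) (x : ℤ → ℕ) : ℝ :=
  ∑ j ∈ Finset.Icc (-(n : ℤ)) (n : ℤ), φ (shiftI j x)

/-- `Ξ^n_{[k,l]}(v)`. -/
def Xi (α β : ℝ) (b : ℕ → ℕ) (φ : (ℤ → ℕ) → ℝ) (n : ℕ) (k l : ℤ) (v : List ℕ) : ℝ :=
  ∑' x : (EnCyl α β b n k l v), Real.exp (birkhoff φ n x.1)

/-- `Ξ^{*,n}_{[k,l]}(v)`. -/
def XiStar (α β : ℝ) (b : ℕ → ℕ) (φ : (ℤ → ℕ) → ℝ) (n : ℕ) (k l : ℤ) (v : List ℕ) : ℝ :=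
  ∑' x : (EnCylStar α β b n k l v), Real.exp (birkhoff φ n x.1)

/-- `δ_i(f)`, as an extended nonnegative real. -/
def oscE {A : Type*} (f : (ℤ → A) → ℝ) (i : ℤ) : ℝ≥0∞ :=
  ⨆ (x : ℤ → A) (y : ℤ → A) (_ : ∀ k : ℤ, k ≠ i → x k = y k), ENNReal.ofReal |f x - f y|

/-- `‖f‖_δ` for a function on the full shift. -/
def enormFull {A : Type*} (f : (ℤ → A) → ℝ) : ℝ≥0∞ := ∑' i : ℤ, oscE f i

/-- `‖f‖_δ` for a function on a subshift `X`: infimum over continuous extensions. -/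
def enormOn {A : Type*} [TopologicalSpace A] (X : Set (ℤ → A)) (f : (ℤ → A) → ℝ) : ℝ≥0∞ :=
  ⨅ (g : (ℤ → A) → ℝ) (_ : Continuous g) (_ : ∀ x ∈ X, g x = f x), enormFull g

/-- `f` has bounded total oscillations on `X` (i.e. `f ∈ B(X)`). -/
def BTO {A : Type*} [TopologicalSpace A] (X : Set (ℤ → A)) (f : (ℤ → A) → ℝ) : Prop :=
  ContinuousOn f X ∧ enormOn X f ≠ ⊤

/-- The real value of `‖f‖_δ`. -/
def dnorm {A : Type*} [TopologicalSpace A] (X : Set (ℤ → A)) (f : (ℤ → A) → ℝ) : ℝ :=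
  (enormOn X f).toReal

/-- The pressure `p(φ)`. -/
def pressure (α β : ℝ) (b : ℕ → ℕ) (φ : (ℤ → ℕ) → ℝ) : ℝ :=
  limUnder atTop fun n : ℕ =>
    Real.log (∑' x : (En α β b n), Real.exp (birkhoff φ n x.1)) / (2 * n + 1)

/-- `ν` is a tangent functional to the pressure at `φ` (an equilibrium measure for `φ`). -/
def IsTangent (α β : ℝ) (b : ℕ → ℕ) (φ : (ℤ → ℕ) → ℝ) (ν : Measure (ℤ → ℕ)) : Prop :=
  ∀ f : (ℤ → ℕ) → ℝ, ContinuousOn f (SigmaAB α β) →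
    pressure α β b φ + ∫ x, f x ∂ν ≤ pressure α β b (fun x => φ x + f x)

/-- The cylinder `[x_1 … x_m]` in `Σ^{α,β}`. -/
def cyl (α β : ℝ) (x : ℤ → ℕ) (m : ℕ) : Set (ℤ → ℕ) :=
  {y ∈ SigmaAB α β | ∀ i : ℕ, 1 ≤ i → i ≤ m → y (i : ℤ) = x (i : ℤ)}

/-- `ν` is a weak Gibbs measure for `ψ` on `Σ^{α,β}`. -/
def WeakGibbs (α β : ℝ) (ν : Measure (ℤ → ℕ)) (ψ : (ℤ → ℕ) → ℝ) : Prop :=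
  ∀ δ : ℝ, 0 < δ → ∃ N : ℕ, ∀ m : ℕ, N ≤ m → ∀ x ∈ SigmaAB α β,
    |Real.log (ν (cyl α β x m)).toReal / m -
      (∑ l ∈ Finset.Icc (1 : ℤ) (m : ℤ), ψ (shiftI l x)) / m| ≤ δ


/-- Concatenation `w·x` of a word and a one-sided sequence. -/
def wordApp (w : List ℕ) (x : ℕ → ℕ) : ℕ → ℕ :=
  fun n => if n < w.length then w.getD n 1 else x (n - w.length)

/-- `σ^k` on one-sided sequences. -/
def shiftN (k : ℕ) (s : ℕ → ℕ) : ℕ → ℕ := fun n => s (k + n)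

end AB

namespace AB
/-! ### Auxiliary development for stmt6 -/

section Stmt6Aux

variable {α β : ℝ} {b : ℕ → ℕ}

/-- The left-limit orbit of 1. -/
def tOrb (α β : ℝ) (b : ℕ → ℕ) : ℕ → ℝ
  | 0 => 1
  | n+1 => β * tOrb α β b n + α - b n

lemma T_eq_fract (x : ℝ) : T α β x = Int.fract (β * x + α) := rfl

lemma T_mem_Ico (x : ℝ) : T α β x ∈ Set.Ico (0:ℝ) 1 :=
  ⟨Int.fract_nonneg _, Int.fract_lt_one _⟩

lemma iter_T_mem {x : ℝ} (hx : x ∈ Set.Ico (0:ℝ) 1) (n : ℕ) :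
    (T α β)^[n] x ∈ Set.Ico (0:ℝ) 1 := by
  cases n with
  | zero => simpa using hx
  | succ n => rw [Function.iterate_succ_apply']; exact T_mem_Ico _

lemma alpha_pos (hβ : 3 < β) (hα : α = 1/β) : 0 < α := by
  rw [hα]; positivity

lemma alpha_lt_third (hβ : 3 < β) (hα : α = 1/β) : α < 1/3 := by
  rw [hα, div_lt_div_iff₀ (by linarith) (by norm_num)]; linarith

lemma beta_mul_alpha (hβ : 3 < β) (hα : α = 1/β) : β * α = 1 := by
  rw [hα]; field_simp

lemma digit_cast {x : ℝ} (hβ : 3 < β) (hα : α = 1/β) (hx : 0 ≤ x) :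
    (digit α β x : ℤ) = ⌊β * x + α⌋ := by
  have h0 : (0:ℝ) ≤ β * x + α := by
    have := alpha_pos hβ hα
    have : 0 ≤ β * x := by positivity
    nlinarith [alpha_pos hβ hα]
  exact Int.toNat_of_nonneg (Int.floor_nonneg.mpr h0)

lemma floor_alpha (hβ : 3 < β) (hα : α = 1/β) : ⌊α⌋ = 0 :=
  Int.floor_eq_zero_iff.mpr ⟨(alpha_pos hβ hα).le, by have := alpha_lt_third hβ hα; linarith⟩

lemma floor_alpha_add_one (hβ : 3 < β) (hα : α = 1/β) : ⌊α + 1⌋ = 1 := by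
  rw [Int.floor_add_one, floor_alpha hβ hα]; norm_num

lemma T_apply_digit {x : ℝ} (hβ : 3 < β) (hα : α = 1/β) (hx : 0 ≤ x) :
    T α β x = β * x + α - digit α β x := by
  have h := digit_cast (x := x) hβ hα hx
  unfold T
  have : ((digit α β x : ℕ) : ℝ) = ((⌊β * x + α⌋ : ℤ) : ℝ) := by
    rw [← h]; push_cast; ring
  rw [this]

lemma iter_T_alpha (hβ : 3 < β) (hα : α = 1/β) (n : ℕ) :
    (T α β)^[n] α = α := by
  have hα0 := alpha_pos hβ hα
  have hα3 := alpha_lt_third hβ hα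
  have h1 : T α β α = α := by
    unfold T
    rw [beta_mul_alpha hβ hα]
    have : ⌊(1:ℝ) + α⌋ = 1 := by rw [add_comm, floor_alpha_add_one hβ hα]
    rw [this]; push_cast; ring
  induction n with
  | zero => rfl
  | succ n ih => rw [Function.iterate_succ_apply', ih, h1]

lemma aSeq_zero (hβ : 3 < β) (hα : α = 1/β) : aSeq α β 0 = 0 := by
  have hα0 := alpha_pos hβ hα
  have hα3 := alpha_lt_third hβ hα
  unfold aSeq iSeq digit
  simp only [Function.iterate_zero, id]
  rw [mul_zero, zero_add, floor_alpha hβ hα]; rfl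

lemma aSeq_one (hβ : 3 < β) (hα : α = 1/β) {n : ℕ} (hn : 1 ≤ n) :
    aSeq α β n = 1 := by
  have hα0 := alpha_pos hβ hα
  have hα3 := alpha_lt_third hβ hα
  unfold aSeq iSeq
  obtain ⟨m, rfl⟩ := Nat.exists_eq_add_of_le hn
  have hT1 : (T α β) 0 = α := by
    unfold T
    have : ⌊β * 0 + α⌋ = 0 := by
      rw [mul_zero, zero_add]; exact floor_alpha hβ hα
    rw [this]; push_cast; ring
  have : (T α β)^[1 + m] 0 = α := by
    rw [add_comm, Function.iterate_add_apply]
    simp only [Function.iterate_one, hT1]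
    exact iter_T_alpha hβ hα m
  rw [this]
  unfold digit
  have : ⌊β * α + α⌋ = 1 := by
    rw [beta_mul_alpha hβ hα, add_comm, floor_alpha_add_one hβ hα]
  simp [this]

end Stmt6Aux

section Stmt6B

variable {α β : ℝ} {b : ℕ → ℕ}

/-- approximation property at level n -/
def TApprox (α β : ℝ) (b : ℕ → ℕ) (n : ℕ) : Prop :=
  ∀ ε : ℝ, 0 < ε → ∀ᶠ x in 𝓝[<] (1:ℝ),
    (T α β)^[n] x ∈ Set.Ioo (tOrb α β b n - ε) (tOrb α β b n)

lemma digit_event (hβ : 3 < β) (hα : α = 1/β) (n : ℕ)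
    (h0 : 0 < tOrb α β b n) (h1 : tOrb α β b n ≤ 1) (hA : TApprox α β b n) :
    ∀ᶠ x in 𝓝[<] (1:ℝ),
      iSeq α β x n = (⌈β * tOrb α β b n + α⌉ - 1).toNat ∧
      (T α β)^[n+1] x = β * ((T α β)^[n] x) + α -
        (((⌈β * tOrb α β b n + α⌉ - 1 : ℤ)) : ℝ) := by
  set t := tOrb α β b n with ht
  set v := β * t + α with hv
  have hβ0 : (0:ℝ) < β := by linarith
  have hgap : ((⌈v⌉ - 1 : ℤ) : ℝ) < v := by
    push_cast
    have := Int.ceil_lt_add_one v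
    linarith
  have hδ : 0 < (v - ((⌈v⌉ - 1 : ℤ) : ℝ)) / β := by
    apply div_pos <;> linarith
  set ε := min ((v - ((⌈v⌉ - 1 : ℤ) : ℝ)) / β) (t/2) with hε
  have hε0 : 0 < ε := lt_min hδ (by linarith)
  filter_upwards [hA ε hε0] with x hx
  obtain ⟨hx1, hx2⟩ := hx
  have hy0 : 0 ≤ (T α β)^[n] x := by
    have : t - ε ≥ t - t/2 := by
      have : ε ≤ t/2 := min_le_right _ _
      linarith
    linarith
  have hfl : ⌊β * ((T α β)^[n] x) + α⌋ = ⌈v⌉ - 1 := by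
    apply Int.floor_eq_iff.mpr
    constructor
    · push_cast
      have hεle : ε ≤ (v - ((⌈v⌉ - 1 : ℤ) : ℝ)) / β := min_le_left _ _
      have : β * (t - ε) + α ≥ ((⌈v⌉ - 1 : ℤ) : ℝ) := by
        have : β * ε ≤ v - ((⌈v⌉ - 1 : ℤ) : ℝ) := by
          rw [mul_comm]
          exact (le_div_iff₀ hβ0).mp hεle
        push_cast at this ⊢
        nlinarith
      push_cast at this
      nlinarith
    · push_cast
      have h2 : β * ((T α β)^[n] x) + α < v := by rw [hv]; nlinarith
      have := Int.le_ceil v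
      linarith
  constructor
  · show digit α β ((T α β)^[n] x) = _
    unfold digit
    rw [hfl]
  · rw [Function.iterate_succ_apply', T_apply_digit hβ hα hy0]
    have : (digit α β ((T α β)^[n] x) : ℝ) = ((⌈v⌉ - 1 : ℤ) : ℝ) := by
      have := digit_cast (x := (T α β)^[n] x) hβ hα hy0
      rw [hfl] at this
      exact_mod_cast congrArg (Int.cast : ℤ → ℝ) this
    rw [this]

lemma bFacts (hβ : 3 < β) (hα : α = 1/β)
    (hb : Tendsto (iSeq α β) (𝓝[<] (1 : ℝ)) (𝓝 b)) :
    ∀ n, TApprox α β b n ∧ 0 < tOrb α β b n ∧ tOrb α β b n ≤ 1 ∧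
      ((b n : ℤ) = ⌈β * tOrb α β b n + α⌉ - 1) := by
  have hβ0 : (0:ℝ) < β := by linarith
  have key : ∀ n, TApprox α β b n ∧ 0 < tOrb α β b n ∧ tOrb α β b n ≤ 1 → 
      (b n : ℤ) = ⌈β * tOrb α β b n + α⌉ - 1 := by
    intro n ⟨hA, h0, h1⟩
    have hev1 := digit_event hβ hα n h0 h1 hA
    have hev2 : ∀ᶠ x in 𝓝[<] (1:ℝ), iSeq α β x n = b n := by
      have h' : Tendsto (fun x => iSeq α β x n) (𝓝[<] (1:ℝ)) (𝓝 (b n)) :=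
        (tendsto_pi_nhds.mp hb) n
      have hsing : ({b n} : Set ℕ) ∈ 𝓝 (b n) := (isOpen_discrete _).mem_nhds rfl
      filter_upwards [h' hsing] with x hx
      exact hx
    have : ∀ᶠ x in 𝓝[<] (1:ℝ), b n = (⌈β * tOrb α β b n + α⌉ - 1).toNat := by
      filter_upwards [hev1, hev2] with x h1' h2'
      rw [← h2', h1'.1]
    obtain ⟨x, hx⟩ := this.exists
    rw [hx]
    have hcpos : 0 ≤ ⌈β * tOrb α β b n + α⌉ - 1 := by
      have hα0 := alpha_pos hβ hα
      have : 0 < β * tOrb α β b n + α := by nlinarith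
      have := Int.ceil_pos.mpr this
      omega
    exact Int.toNat_of_nonneg hcpos
  intro n
  induction n with
  | zero =>
    refine ⟨?_, by norm_num [tOrb], by norm_num [tOrb], ?_⟩
    · intro ε hε
      have : Set.Ioo (1 - ε) 1 ∈ 𝓝[<] (1:ℝ) :=
        Ioo_mem_nhdsLT_of_mem (by constructor <;> [linarith; rfl])
      filter_upwards [this] with x hx
      simpa [tOrb] using hx
    · apply key 0
      refine ⟨?_, by norm_num [tOrb], by norm_num [tOrb]⟩
      intro ε hε
      have : Set.Ioo (1 - ε) 1 ∈ 𝓝[<] (1:ℝ) :=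
        Ioo_mem_nhdsLT_of_mem (by constructor <;> [linarith; rfl])
      filter_upwards [this] with x hx
      simpa [tOrb] using hx
  | succ n ih =>
    obtain ⟨hA, h0, h1, hbe⟩ := ih
    have hstep : tOrb α β b (n+1) = β * tOrb α β b n + α - ((⌈β * tOrb α β b n + α⌉ - 1 : ℤ) : ℝ) := by
      show β * tOrb α β b n + α - (b n : ℝ) = _
      rw [show ((b n : ℕ) : ℝ) = ((b n : ℤ) : ℝ) from by push_cast; ring, hbe]
    have h0' : 0 < tOrb α β b (n+1) := by
      rw [hstep]
      have := Int.ceil_lt_add_one (β * tOrb α β b n + α)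
      push_cast
      push_cast at this
      linarith
    have h1' : tOrb α β b (n+1) ≤ 1 := by
      rw [hstep]
      have := Int.le_ceil (β * tOrb α β b n + α)
      push_cast
      push_cast at this
      linarith
    have hA' : TApprox α β b (n+1) := by
      intro ε hε
      have hev := digit_event hβ hα n h0 h1 hA
      have hA2 := hA (min (ε/β) (tOrb α β b n / 2)) (lt_min (by positivity) (by linarith))
      filter_upwards [hev, hA2] with x hx1 hx2
      obtain ⟨-, hTeq⟩ := hx1
      obtain ⟨hlo, hhi⟩ := hx2
      rw [hTeq, hstep]
      constructor
      · have hmin : min (ε/β) (tOrb α β b n / 2) ≤ ε/β := min_le_left _ _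
        have : β * (min (ε/β) (tOrb α β b n / 2)) ≤ ε := by
          rw [mul_comm]
          calc (min (ε/β) (tOrb α β b n / 2)) * β ≤ (ε/β) * β := by nlinarith
            _ = ε := by field_simp
        nlinarith
      · nlinarith
    exact ⟨hA', h0', h1', key (n+1) ⟨hA', h0', h1'⟩⟩

lemma tOrb_pos (hβ : 3 < β) (hα : α = 1/β)
    (hb : Tendsto (iSeq α β) (𝓝[<] (1 : ℝ)) (𝓝 b)) (n : ℕ) :
    0 < tOrb α β b n := (bFacts hβ hα hb n).2.1

lemma tOrb_le_one (hβ : 3 < β) (hα : α = 1/β)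
    (hb : Tendsto (iSeq α β) (𝓝[<] (1 : ℝ)) (𝓝 b)) (n : ℕ) :
    tOrb α β b n ≤ 1 := (bFacts hβ hα hb n).2.2.1

lemma b_ceil (hβ : 3 < β) (hα : α = 1/β)
    (hb : Tendsto (iSeq α β) (𝓝[<] (1 : ℝ)) (𝓝 b)) (n : ℕ) :
    (b n : ℤ) = ⌈β * tOrb α β b n + α⌉ - 1 := (bFacts hβ hα hb n).2.2.2

end Stmt6B

section Stmt6C

variable {α β : ℝ} {b : ℕ → ℕ}

/-- suffix-of-length-k matches the first k letters of s -/
def Msuf (s : ℕ → ℕ) (k : ℕ) (w : List ℕ) : Prop :=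
  k ≤ w.length ∧ ∀ t, t < k → w.getD (w.length - k + t) 0 = s t

/-- admissibility -/
def ADM (α β : ℝ) (b : ℕ → ℕ) (w : List ℕ) : Prop :=
  ∀ i, i < w.length →
    (w.getD i 0 = 0 → ∀ k, 1 ≤ k → ¬ Msuf (aSeq α β) k (w.take i)) ∧
    (∀ k, Msuf b k (w.take i) → w.getD i 0 ≤ b k)

lemma getD_take' (w : List ℕ) {i j : ℕ} (h : j < i) :
    (w.take i).getD j 0 = w.getD j 0 := by
  rw [List.getD_eq_getElem?_getD, List.getD_eq_getElem?_getD, List.getElem?_take, if_pos h]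

lemma length_take_of_le {w : List ℕ} {i : ℕ} (h : i ≤ w.length) :
    (w.take i).length = i := by
  rw [List.length_take]; omega

lemma iSeq_shift (x : ℝ) (k i : ℕ) :
    iSeq α β x (k + i) = iSeq α β ((T α β)^[k] x) i := by
  unfold iSeq
  rw [add_comm, Function.iterate_add_apply]

lemma lt_tOrb (hβ : 3 < β) (hα : α = 1/β)
    (hb : Tendsto (iSeq α β) (𝓝[<] (1 : ℝ)) (𝓝 b))
    {y : ℝ} (hy : y ∈ Set.Ico (0:ℝ) 1) :
    ∀ k, (∀ i, i < k → iSeq α β y i = b i) → (T α β)^[k] y < tOrb α β b k := by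
  intro k
  induction k with
  | zero => intro _; simpa [tOrb] using hy.2
  | succ k ih =>
    intro h
    have hk := ih (fun i hi => h i (by omega))
    have hmem := iter_T_mem (α:=α) (β:=β) hy k
    rw [Function.iterate_succ_apply', T_apply_digit hβ hα hmem.1]
    have hd : digit α β ((T α β)^[k] y) = b k := h k (by omega)
    rw [hd]
    show β * (T α β)^[k] y + α - (b k : ℝ) < tOrb α β b (k+1)
    show _ < β * tOrb α β b k + α - (b k : ℝ)
    nlinarith [hβ]

lemma ge_alpha (hβ : 3 < β) (hα : α = 1/β)
    {y : ℝ} (hy : y ∈ Set.Ico (0:ℝ) 1) :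
    ∀ k, 1 ≤ k → (∀ i, i < k → iSeq α β y i = aSeq α β i) → α ≤ (T α β)^[k] y := by
  intro k
  induction k with
  | zero => omega
  | succ k ih =>
    intro _ h
    rcases Nat.eq_zero_or_pos k with hk0 | hk1
    · subst hk0
      have h0 : digit α β y = 0 := by
        have := h 0 (by omega)
        rwa [aSeq_zero hβ hα] at this
      rw [Function.iterate_one, T_apply_digit hβ hα hy.1, h0]
      push_cast
      have := alpha_pos hβ hα
      nlinarith [hy.1]
    · have hk := ih hk1 (fun i hi => h i (by omega))
      have hmem := iter_T_mem (α:=α) (β:=β) hy k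
      have hd : digit α β ((T α β)^[k] y) = 1 := by
        have := h k (by omega)
        rwa [aSeq_one hβ hα hk1] at this
      rw [Function.iterate_succ_apply', T_apply_digit hβ hα hmem.1, hd]
      have h1 := beta_mul_alpha hβ hα
      push_cast
      nlinarith

lemma digit_le_of_lt (hβ : 3 < β) (hα : α = 1/β) {y t : ℝ}
    (hy : 0 ≤ y) (hlt : y < t) : (digit α β y : ℤ) ≤ ⌈β * t + α⌉ - 1 := by
  rw [digit_cast hβ hα hy]
  have h1 : (⌊β * y + α⌋ : ℝ) ≤ β * y + α := Int.floor_le _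
  have h2 : β * y + α < β * t + α := by nlinarith
  have h3 : (β * t + α : ℝ) ≤ (⌈β * t + α⌉ : ℤ) := Int.le_ceil _
  have : (⌊β * y + α⌋ : ℝ) < ((⌈β * t + α⌉ : ℤ) : ℝ) := by linarith
  have h4 : ⌊β * y + α⌋ < ⌈β * t + α⌉ := by exact_mod_cast this
  omega

lemma digit_ge_one (hβ : 3 < β) (hα : α = 1/β) {y : ℝ} (hy : α ≤ y) :
    1 ≤ digit α β y := by
  have h1 := beta_mul_alpha hβ hα
  have : 1 ≤ ⌊β * y + α⌋ := by
    have : (1:ℝ) + α ≤ β * y + α := by nlinarith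
    have := Int.le_floor.mpr (by push_cast; have := alpha_pos hβ hα; linarith :
      ((1:ℤ):ℝ) ≤ β * y + α)
    exact this
  unfold digit
  omega

lemma wordN_getD {s : ℕ → ℕ} {k len i : ℕ} (hi : i < len) :
    (wordN s k len).getD i 0 = s (k + i) := by
  unfold wordN
  rw [List.getD_eq_getElem?_getD, List.getElem?_map, List.getElem?_range hi]
  rfl

lemma length_wordN (s : ℕ → ℕ) (k len : ℕ) : (wordN s k len).length = len := by
  simp [wordN]

lemma lang_prefix {w : List ℕ} (hw : w ∈ Lang α β) :
    ∃ x ∈ Set.Ico (0:ℝ) 1, ∀ i, i < w.length → iSeq α β x i = w.getD i 0 := by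
  obtain ⟨s, hs, k, hwk⟩ := hw
  set L := w.length with hL
  set U := ⋂ (i : Fin L), (fun t : ℕ → ℕ => t (k + i)) ⁻¹' {s (k + i)} with hU
  have hUopen : IsOpen U :=
    isOpen_iInter_of_finite fun i => (continuous_apply _).isOpen_preimage _ (isOpen_discrete _)
  have hsU : s ∈ U := by
    rw [hU]
    exact Set.mem_iInter.mpr fun i => rfl
  obtain ⟨t, htU, ht⟩ := _root_.mem_closure_iff.mp hs U hUopen hsU
  obtain ⟨x, hx, rfl⟩ := ht
  refine ⟨(T α β)^[k] x, iter_T_mem (α:=α) (β:=β) hx k, fun i hi => ?_⟩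
  have h1 : iSeq α β x (k + i) = s (k + i) := by
    have := Set.mem_iInter.mp htU ⟨i, hi⟩
    exact this
  have h2 : w.getD i 0 = s (k + i) := by
    rw [hwk]
    exact wordN_getD hi
  rw [← iSeq_shift, h1, h2]

lemma adm_of_lang (hβ : 3 < β) (hα : α = 1/β)
    (hb : Tendsto (iSeq α β) (𝓝[<] (1 : ℝ)) (𝓝 b))
    {w : List ℕ} (hw : w ∈ Lang α β) : ADM α β b w := by
  obtain ⟨x, hx, hpre⟩ := lang_prefix hw
  intro i hi
  constructor
  · intro hwi k hk hM
    obtain ⟨hkle, hMk⟩ := hM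
    rw [length_take_of_le hi.le] at hkle hMk
    have hdig : ∀ t, t < k → iSeq α β ((T α β)^[i-k] x) t = aSeq α β t := by
      intro t ht
      rw [← iSeq_shift]
      have h1 : i - k + t < i := by omega
      rw [hpre _ (by omega)]
      rw [← getD_take' w h1, hMk t ht]
    have hge := ge_alpha hβ hα (iter_T_mem (α:=α) (β:=β) hx (i-k)) k hk hdig
    have h1 : iSeq α β x i = digit α β ((T α β)^[k] ((T α β)^[i-k] x)) := by
      rw [← Function.iterate_add_apply]
      have : k + (i - k) = i := by omega
      rw [this]
      rfl
    have := digit_ge_one hβ hα hge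
    rw [← h1] at this
    rw [hpre i hi] at this
    omega
  · intro k hM
    obtain ⟨hkle, hMk⟩ := hM
    rw [length_take_of_le hi.le] at hkle hMk
    have hdig : ∀ t, t < k → iSeq α β ((T α β)^[i-k] x) t = b t := by
      intro t ht
      rw [← iSeq_shift]
      have h1 : i - k + t < i := by omega
      rw [hpre _ (by omega)]
      rw [← getD_take' w h1, hMk t ht]
    have hlt := lt_tOrb hβ hα hb (iter_T_mem (α:=α) (β:=β) hx (i-k)) k hdig
    have h1 : iSeq α β x i = digit α β ((T α β)^[k] ((T α β)^[i-k] x)) := by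
      rw [← Function.iterate_add_apply]
      have : k + (i - k) = i := by omega
      rw [this]
      rfl
    have hle := digit_le_of_lt hβ hα (iter_T_mem (α:=α) (β:=β) (iter_T_mem (α:=α) (β:=β) hx (i-k)) k).1 hlt
    rw [← b_ceil hβ hα hb] at hle
    rw [← hpre i hi, h1]
    exact_mod_cast hle

lemma b_mem_Xab (hβ : 3 < β)
    (hb : Tendsto (iSeq α β) (𝓝[<] (1 : ℝ)) (𝓝 b)) : b ∈ Xab α β := by
  apply mem_closure_of_tendsto hb
  have : Set.Ioo (0:ℝ) 1 ∈ 𝓝[<] (1:ℝ) :=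
    Ioo_mem_nhdsLT_of_mem ⟨by norm_num, le_refl 1⟩
  filter_upwards [this] with x hx
  exact ⟨x, ⟨hx.1.le, hx.2⟩, rfl⟩

lemma preb_lang (hβ : 3 < β)
    (hb : Tendsto (iSeq α β) (𝓝[<] (1 : ℝ)) (𝓝 b)) (m : ℕ) :
    pre b m ∈ Lang α β := by
  refine ⟨b, b_mem_Xab hβ hb, 0, ?_⟩
  have : (pre b m).length = m := by simp [pre]
  rw [this]
  unfold pre wordN
  exact List.map_congr_left fun i _ => by rw [Nat.zero_add]

lemma adm_preb (hβ : 3 < β) (hα : α = 1/β)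
    (hb : Tendsto (iSeq α β) (𝓝[<] (1 : ℝ)) (𝓝 b)) (m : ℕ) :
    ADM α β b (pre b m) :=
  adm_of_lang hβ hα hb (preb_lang hβ hb m)

end Stmt6C

section Stmt6K

variable {α β : ℝ} {b : ℕ → ℕ} {s s' : ℕ → ℕ} {w u : List ℕ} {k p : ℕ}

lemma length_pre (s : ℕ → ℕ) (l : ℕ) : (pre s l).length = l := by simp [pre]

lemma getD_pre {t l : ℕ} (h : t < l) : (pre s l).getD t 0 = s t := by
  unfold pre
  rw [List.getD_eq_getElem?_getD, List.getElem?_map, List.getElem?_range h]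
  rfl

lemma pre_zero : pre s 0 = [] := by simp [pre]

lemma msuf_iff_drop (hk : k ≤ w.length) :
    w.drop (w.length - k) = pre s k ↔ ∀ t, t < k → w.getD (w.length - k + t) 0 = s t := by
  constructor
  · intro h t ht
    have h1 : w.getD (w.length - k + t) 0 = (w.drop (w.length - k)).getD t 0 := by
      rw [List.getD_eq_getElem?_getD, List.getD_eq_getElem?_getD, List.getElem?_drop]
    rw [h1, h, getD_pre ht]
  · intro h
    apply List.ext_getElem
    · rw [List.length_drop, length_pre]; omega
    · intro n h1 h2
      rw [List.length_drop] at h1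
      rw [length_pre] at h2
      have e1 : (w.drop (w.length - k))[n] = (w.drop (w.length - k)).getD n 0 :=
        (List.getD_eq_getElem _ _ _).symm
      have e2 : (pre s k)[n] = (pre s k).getD n 0 := (List.getD_eq_getElem _ _ _).symm
      rw [e1, e2, getD_pre h2]
      have h3 : (w.drop (w.length - k)).getD n 0 = w.getD (w.length - k + n) 0 := by
        rw [List.getD_eq_getElem?_getD, List.getD_eq_getElem?_getD, List.getElem?_drop]
      rw [h3]
      exact h n h2

lemma msuf_zero (s : ℕ → ℕ) (w : List ℕ) : Msuf s 0 w := ⟨Nat.zero_le _, by omega⟩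

lemma msuf_kk (s : ℕ → ℕ) (w : List ℕ) : Msuf s (kk s w) w := by
  have h0 : w.drop (w.length - 0) = pre s 0 := by simp [pre_zero]
  have := Nat.findGreatest_spec (P := fun k => w.drop (w.length - k) = pre s k)
    (Nat.zero_le w.length) h0
  have hle : kk s w ≤ w.length := Nat.findGreatest_le _
  exact ⟨hle, (msuf_iff_drop hle).mp this⟩

lemma le_kk (h : Msuf s k w) : k ≤ kk s w :=
  Nat.le_findGreatest h.1 ((msuf_iff_drop h.1).mpr h.2)

lemma kk_le (s : ℕ → ℕ) (w : List ℕ) : kk s w ≤ w.length := Nat.findGreatest_le _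

lemma kk_eq_zero_iff : kk s w = 0 ↔ ∀ k, 1 ≤ k → ¬ Msuf s k w := by
  constructor
  · intro h0 k hk hM
    have := le_kk hM
    omega
  · intro h
    by_contra h0
    exact h _ (by omega) (msuf_kk s w)

/-- restriction of a match of a snoc -/
lemma msuf_snoc_restrict {d : ℕ} (h : Msuf s k (u ++ [d])) (hk : 1 ≤ k) :
    Msuf s (k - 1) u ∧ d = s (k - 1) := by
  obtain ⟨h1, h2⟩ := h
  rw [List.length_append, List.length_singleton] at h1 h2
  constructor
  · refine ⟨by omega, fun t ht => ?_⟩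
    have := h2 t (by omega)
    rw [List.getD_eq_getElem?_getD, List.getElem?_append, if_pos (by omega)] at this
    rw [List.getD_eq_getElem?_getD]
    convert this using 3
    omega
  · have := h2 (k-1) (by omega)
    rw [List.getD_eq_getElem?_getD, List.getElem?_append, if_neg (by omega)] at this
    have e : u.length + 1 - k + (k - 1) - u.length = 0 := by omega
    rw [e] at this
    simpa using this

/-- extension of a match by one letter -/
lemma msuf_snoc_extend {d : ℕ} (h : Msuf s k u) (hd : d = s k) :
    Msuf s (k + 1) (u ++ [d]) := by
  obtain ⟨h1, h2⟩ := h
  refine ⟨by rw [List.length_append, List.length_singleton]; omega, fun t ht => ?_⟩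
  rw [List.length_append, List.length_singleton]
  rcases Nat.lt_or_ge t k with h' | h'
  · rw [List.getD_eq_getElem?_getD, List.getElem?_append, if_pos (by omega)]
    have := h2 t h'
    rw [List.getD_eq_getElem?_getD] at this
    convert this using 3
    omega
  · have ht' : t = k := by omega
    rw [ht']
    rw [List.getD_eq_getElem?_getD, List.getElem?_append, if_neg (by omega)]
    have e : u.length + 1 - (k + 1) + k - u.length = 0 := by omega
    rw [e]
    simpa using hd

/-- letters of an a-match -/
lemma msuf_a_val (hβ : 3 < β) (hα : α = 1/β) (h : Msuf (aSeq α β) k w) (hk : 1 ≤ k) :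
    w.getD (w.length - k) 0 = 0 ∧
    (∀ t, 1 ≤ t → t < k → w.getD (w.length - k + t) 0 = 1) := by
  obtain ⟨h1, h2⟩ := h
  constructor
  · have := h2 0 (by omega)
    rwa [Nat.add_zero, aSeq_zero hβ hα] at this
  · intro t ht1 ht2
    have := h2 t ht2
    rwa [aSeq_one hβ hα ht1] at this

/-- a-matches are unique -/
lemma msuf_a_unique (hβ : 3 < β) (hα : α = 1/β)
    (h : Msuf (aSeq α β) k w) (hk : 1 ≤ k) {k' : ℕ}
    (h' : Msuf (aSeq α β) k' w) (hk' : k ≤ k') : k = k' := by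
  by_contra hne
  have hlt : k < k' := by omega
  have hv := (msuf_a_val hβ hα h hk).1
  have hv' := (msuf_a_val hβ hα h' (by omega)).2 (k' - k) (by omega) (by omega)
  have he : w.length - k' + (k' - k) = w.length - k := by
    have := h'.1; omega
  rw [he] at hv'
  rw [hv] at hv'
  exact absurd hv' (by norm_num)

lemma msuf_a_eq_kk (hβ : 3 < β) (hα : α = 1/β)
    (h : Msuf (aSeq α β) k w) (hk : 1 ≤ k) : kk (aSeq α β) w = k :=
  (msuf_a_unique hβ hα h hk (msuf_kk _ w) (le_kk h)).symm

/-- transfer of matches through a b-suffix -/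
lemma msuf_transfer (hp : Msuf s' p u) (hk : k ≤ p) :
    Msuf s k u ↔ Msuf s k (pre s' p) := by
  have hlen : (pre s' p).length = p := length_pre _ _
  have hpl := hp.1
  have key : ∀ t, t < k → u.getD (u.length - k + t) 0 = (pre s' p).getD (p - k + t) 0 := by
    intro t ht
    have h1 : u.length - k + t = u.length - p + (p - k + t) := by omega
    rw [h1, hp.2 _ (by omega), getD_pre (by omega)]
  constructor
  · intro ⟨h1, h2⟩
    refine ⟨by omega, fun t ht => ?_⟩
    rw [hlen, ← key t ht]
    exact h2 t ht
  · intro ⟨h1, h2⟩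
    refine ⟨by omega, fun t ht => ?_⟩
    rw [key t ht]
    have := h2 t ht
    rwa [hlen] at this

lemma b0_ge_3 (hβ : 3 < β) (hα : α = 1/β)
    (hb : Tendsto (iSeq α β) (𝓝[<] (1 : ℝ)) (𝓝 b)) : 3 ≤ b 0 := by
  have h := b_ceil hβ hα hb 0
  have ht : tOrb α β b 0 = 1 := rfl
  rw [ht, mul_one] at h
  have hα0 := alpha_pos hβ hα
  have : (3:ℝ) < β + α := by linarith
  have h4 : (4:ℤ) ≤ ⌈β + α⌉ := by
    have : ((3:ℤ):ℝ) < β + α := by push_cast; linarith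
    have := Int.lt_ceil.mpr this
    omega
  omega

lemma b_le_b0 (hβ : 3 < β) (hα : α = 1/β)
    (hb : Tendsto (iSeq α β) (𝓝[<] (1 : ℝ)) (𝓝 b)) (n : ℕ) : b n ≤ b 0 := by
  have h := b_ceil hβ hα hb n
  have h0 := b_ceil hβ hα hb 0
  have ht : tOrb α β b 0 = 1 := rfl
  rw [ht, mul_one] at h0
  have hle : β * tOrb α β b n + α ≤ β + α := by
    have h1 := tOrb_le_one hβ hα hb n
    nlinarith
  have := Int.ceil_le_ceil hle
  omega

/-- kk a transfers through a b-prefix suffix -/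
lemma kk_a_transfer (hβ : 3 < β) (hα : α = 1/β)
    (hb : Tendsto (iSeq α β) (𝓝[<] (1 : ℝ)) (𝓝 b))
    (hp : Msuf b p u) (hp1 : 1 ≤ p) :
    kk (aSeq α β) u = kk (aSeq α β) (pre b p) := by
  have hb0 := b0_ge_3 hβ hα hb
  have hle : kk (aSeq α β) u ≤ p := by
    by_contra hgt
    push_neg at hgt
    have hm := msuf_kk (aSeq α β) u
    set c := kk (aSeq α β) u with hc
    have hval := (msuf_a_val hβ hα hm (by omega)).2 (c - p) (by omega) (by omega)
    have hbv := hp.2 0 (by omega)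
    have he : u.length - c + (c - p) = u.length - p + 0 := by
      have := hm.1; omega
    rw [he, hbv] at hval
    omega
  rcases Nat.eq_zero_or_pos (kk (aSeq α β) u) with h0 | hpos
  · rcases Nat.eq_zero_or_pos (kk (aSeq α β) (pre b p)) with h0' | hpos'
    · omega
    · exfalso
      have hm' := msuf_kk (aSeq α β) (pre b p)
      have : Msuf (aSeq α β) (kk (aSeq α β) (pre b p)) u := by
        rw [msuf_transfer hp (by
          have := kk_le (aSeq α β) (pre b p)
          rwa [length_pre] at this)]
        exact hm'
      have := le_kk this
      omega
  · have hm := msuf_kk (aSeq α β) u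
    have : Msuf (aSeq α β) (kk (aSeq α β) u) (pre b p) := (msuf_transfer hp hle).mp hm
    exact (msuf_a_eq_kk hβ hα this hpos).symm

end Stmt6K

section Stmt6S

variable {α β : ℝ} {b : ℕ → ℕ} {u w : List ℕ} {d : ℕ}

lemma getD_snoc_last (u : List ℕ) (d : ℕ) : (u ++ [d]).getD u.length 0 = d := by
  rw [List.getD_eq_getElem?_getD, List.getElem?_append, if_neg (by omega)]
  simp

lemma getD_snoc_lt {i : ℕ} (h : i < u.length) : (u ++ [d]).getD i 0 = u.getD i 0 := by
  rw [List.getD_eq_getElem?_getD, List.getElem?_append, if_pos h,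
    ← List.getD_eq_getElem?_getD]

lemma kk_a_snoc_zero (hβ : 3 < β) (hα : α = 1/β) (u : List ℕ) :
    kk (aSeq α β) (u ++ [0]) = 1 := by
  apply msuf_a_eq_kk hβ hα _ (le_refl 1)
  refine ⟨by rw [List.length_append, List.length_singleton]; omega, fun t ht => ?_⟩
  have ht0 : t = 0 := by omega
  subst ht0
  rw [List.length_append, List.length_singleton, aSeq_zero hβ hα]
  have he : u.length + 1 - 1 + 0 = u.length := by omega
  rw [he, getD_snoc_last]

lemma kk_a_snoc_one (hβ : 3 < β) (hα : α = 1/β)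
    (hc : 1 ≤ kk (aSeq α β) u) :
    kk (aSeq α β) (u ++ [1]) = kk (aSeq α β) u + 1 := by
  apply msuf_a_eq_kk hβ hα _ (by omega)
  exact msuf_snoc_extend (msuf_kk _ u) (aSeq_one hβ hα hc).symm

lemma kk_a_snoc_one' (hβ : 3 < β) (hα : α = 1/β)
    (hc : kk (aSeq α β) u = 0) :
    kk (aSeq α β) (u ++ [1]) = 0 := by
  rw [kk_eq_zero_iff]
  intro k hk hM
  obtain ⟨hM', hval⟩ := msuf_snoc_restrict hM hk
  rcases Nat.eq_or_lt_of_le hk with h1 | h2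
  · rw [← h1] at hval
    rw [aSeq_zero hβ hα] at hval
    omega
  · have := le_kk hM'
    omega

lemma kk_a_snoc_ge2 (hβ : 3 < β) (hα : α = 1/β) (hd : 2 ≤ d) :
    kk (aSeq α β) (u ++ [d]) = 0 := by
  rw [kk_eq_zero_iff]
  intro k hk hM
  obtain ⟨hM', hval⟩ := msuf_snoc_restrict hM hk
  rcases Nat.eq_or_lt_of_le hk with h1 | h2
  · rw [← h1] at hval
    rw [aSeq_zero hβ hα] at hval
    omega
  · rw [aSeq_one hβ hα (by omega)] at hval
    omega

/-- run of agreement with b along the word -/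
def rrun (b : ℕ → ℕ) (w : List ℕ) : ℕ :=
  w.foldl (fun r d => if d = b r then r + 1 else 0) 0

lemma rrun_nil : rrun b [] = 0 := rfl

lemma rrun_snoc (u : List ℕ) (d : ℕ) :
    rrun b (u ++ [d]) = if d = b (rrun b u) then rrun b u + 1 else 0 := by
  unfold rrun
  rw [List.foldl_append]
  rfl

lemma rrun_msuf (b : ℕ → ℕ) (u : List ℕ) : Msuf b (rrun b u) u := by
  induction u using List.reverseRecOn with
  | nil => exact msuf_zero _ _
  | append_singleton u d ih =>
    rw [rrun_snoc]
    split_ifs with hd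
    · exact msuf_snoc_extend ih hd
    · exact msuf_zero _ _

lemma adm_take (h : ADM α β b w) (m : ℕ) : ADM α β b (w.take m) := by
  intro j hj
  rw [List.length_take] at hj
  have hj1 : j < m := by omega
  have hj2 : j < w.length := by omega
  have e1 : (w.take m).getD j 0 = w.getD j 0 := getD_take' w hj1
  have e2 : (w.take m).take j = w.take j := by
    rw [List.take_take]
    congr 1
    omega
  rw [e1, e2]
  exact h j hj2

lemma adm_of_snoc (h : ADM α β b (u ++ [d])) : ADM α β b u := by
  have := adm_take h u.length
  rwa [List.take_left] at this

lemma adm_last_a (hβ : 3 < β) (hα : α = 1/β)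
    (h : ADM α β b (u ++ [d])) (hd : d = 0) : kk (aSeq α β) u = 0 := by
  have hlen : u.length < (u ++ [d]).length := by
    rw [List.length_append, List.length_singleton]; omega
  have h1 := (h u.length hlen).1
  rw [getD_snoc_last, List.take_left] at h1
  rw [kk_eq_zero_iff]
  exact h1 hd

lemma adm_last_b (h : ADM α β b (u ++ [d])) {k : ℕ} (hM : Msuf b k u) : d ≤ b k := by
  have hlen : u.length < (u ++ [d]).length := by
    rw [List.length_append, List.length_singleton]; omega
  have h1 := (h u.length hlen).2
  rw [getD_snoc_last, List.take_left] at h1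
  exact h1 k hM

/-- Soundness: admissible words are realized by orbits. -/
lemma realize (hβ : 3 < β) (hα : α = 1/β)
    (hb : Tendsto (iSeq α β) (𝓝[<] (1 : ℝ)) (𝓝 b)) :
    ∀ w : List ℕ, ADM α β b w →
      ((if kk (aSeq α β) w = 0 then (0:ℝ) else α) < tOrb α β b (rrun b w) ∧
       ∀ t : ℝ, (if kk (aSeq α β) w = 0 then (0:ℝ) else α) ≤ t →
         t < tOrb α β b (rrun b w) →
         ∃ x ∈ Set.Ico (0:ℝ) 1, (T α β)^[w.length] x = t ∧
           ∀ i, i < w.length → iSeq α β x i = w.getD i 0) := by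
  have hβ0 : (0:ℝ) < β := by linarith
  have hα0 := alpha_pos hβ hα
  have hα13 := alpha_lt_third hβ hα
  have hβα := beta_mul_alpha hβ hα
  intro w
  induction w using List.reverseRecOn with
  | nil =>
    intro _
    constructor
    · have : kk (aSeq α β) ([] : List ℕ) = 0 := by
        have := kk_le (aSeq α β) ([] : List ℕ)
        simpa using this
      rw [this, if_pos rfl]
      show (0:ℝ) < tOrb α β b (rrun b [])
      rw [rrun_nil]
      norm_num [tOrb]
    · intro t h1 h2
      have hkk : kk (aSeq α β) ([] : List ℕ) = 0 := by
        have := kk_le (aSeq α β) ([] : List ℕ)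
        simpa using this
      rw [hkk, if_pos rfl] at h1
      rw [rrun_nil] at h2
      have h2' : t < 1 := by simpa [tOrb] using h2
      exact ⟨t, ⟨h1, h2'⟩, by simp, by simp⟩
  | append_singleton u d ih =>
    intro hADM
    have hu : ADM α β b u := adm_of_snoc hADM
    obtain ⟨hAB, hreal⟩ := ih hu
    set c := kk (aSeq α β) u with hc
    set r := rrun b u with hr
    set L := u.length with hL
    have hd0 : d = 0 → c = 0 := fun h => adm_last_a hβ hα hADM h
    have hdb : d ≤ b r := adm_last_b hADM (rrun_msuf b u)
    have tpos := tOrb_pos hβ hα hb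
    have tle1 := tOrb_le_one hβ hα hb
    have hbr := b_ceil hβ hα hb r
    -- generic upper-bound step
    have hBgen : ∀ t : ℝ, t < tOrb α β b (rrun b (u ++ [d])) → (t + d - α)/β < tOrb α β b r := by
      intro t ht
      rw [rrun_snoc] at ht
      rw [div_lt_iff₀ hβ0]
      by_cases hdr : d = b r
      · rw [if_pos hdr] at ht
        have : tOrb α β b (r + 1) = β * tOrb α β b r + α - b r := rfl
        rw [this] at ht
        rw [hdr]
        push_cast at ht ⊢
        linarith
      · rw [if_neg hdr] at ht
        have ht1 : t < 1 := by simpa [tOrb] using ht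
        have hdlt : d + 1 ≤ b r := by omega
        have hceil : ((b r : ℤ) : ℝ) ≤ β * tOrb α β b r + α := by
          rw [hbr]
          push_cast
          have := Int.ceil_lt_add_one (β * tOrb α β b r + α)
          linarith
        have : (d : ℝ) + 1 ≤ (b r : ℝ) := by exact_mod_cast hdlt
        push_cast at hceil
        nlinarith
    -- main realization helper
    have main : ∀ t : ℝ, 0 ≤ t → t < 1 →
        (if c = 0 then (0:ℝ) else α) ≤ (t + d - α)/β →
        (t + d - α)/β < tOrb α β b r →
        ∃ x ∈ Set.Ico (0:ℝ) 1, (T α β)^[(u ++ [d]).length] x = t ∧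
          ∀ i, i < (u ++ [d]).length → iSeq α β x i = (u ++ [d]).getD i 0 := by
      intro t ht0 ht1 hAlow hBhigh
      obtain ⟨x, hx, hTx, hdig⟩ := hreal ((t + d - α)/β) hAlow hBhigh
      set t0 := (t + d - α)/β with ht0def
      have ht00 : 0 ≤ t0 := le_trans (by split_ifs <;> simp [hα0.le]) hAlow
      have heq : β * t0 + α = t + d := by
        rw [ht0def]
        field_simp
        ring
      have hfl : ⌊β * t0 + α⌋ = (d : ℤ) := by
        rw [heq]
        have : ⌊t + (d:ℝ)⌋ = ⌊t⌋ + d := Int.floor_add_natCast t d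
        rw [this, Int.floor_eq_zero_iff.mpr ⟨ht0, ht1⟩]
        omega
      have hdg : digit α β t0 = d := by
        have := digit_cast (x := t0) hβ hα ht00
        rw [hfl] at this
        exact_mod_cast this
      have hT : T α β t0 = t := by
        rw [T_apply_digit hβ hα ht00, hdg, heq]
        ring
      refine ⟨x, hx, ?_, ?_⟩
      · rw [List.length_append, List.length_singleton]
        rw [Function.iterate_succ_apply', hTx, hT]
      · intro i hi
        rw [List.length_append, List.length_singleton] at hi
        rcases Nat.lt_or_ge i L with h' | h'
        · rw [getD_snoc_lt h']
          exact hdig i h'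
        · have hiL : i = L := by omega
          subst hiL
          show digit α β ((T α β)^[L] x) = _
          rw [hTx, hdg, getD_snoc_last]
    -- case analysis on d and c
    have habove : ∀ t : ℝ,
        (if kk (aSeq α β) (u ++ [d]) = 0 then (0:ℝ) else α) ≤ t →
        t < tOrb α β b (rrun b (u ++ [d])) →
        ∃ x ∈ Set.Ico (0:ℝ) 1, (T α β)^[(u ++ [d]).length] x = t ∧
          ∀ i, i < (u ++ [d]).length → iSeq α β x i = (u ++ [d]).getD i 0 := by
      intro t hA' hB'
      have ht0 : 0 ≤ t := le_trans (by split_ifs <;> simp [hα0.le]) hA'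
      have ht1 : t < 1 := lt_of_lt_of_le hB' (tle1 _)
      apply main t ht0 ht1 _ (hBgen t hB')
      -- A-side numeric, case analysis
      rcases Nat.eq_zero_or_pos d with hdz | hdpos
      · subst hdz
        rw [if_pos (hd0 rfl)]
        have hc0 := hd0 rfl
        rw [kk_a_snoc_zero hβ hα] at hA'
        rw [if_neg (by omega)] at hA'
        push_cast
        have : α ≤ t := hA'
        apply div_nonneg _ hβ0.le
        push_cast
        linarith
      · rcases Nat.lt_or_ge d 2 with hd1 | hd2
        · have hde : d = 1 := by omega
          subst hde
          rcases Nat.eq_zero_or_pos c with hc0 | hc1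
          · rw [if_pos hc0]
            apply div_nonneg _ hβ0.le
            push_cast
            linarith
          · rw [if_neg (by omega)]
            rw [kk_a_snoc_one hβ hα hc1] at hA'
            rw [if_neg (by omega)] at hA'
            rw [le_div_iff₀ hβ0]
            push_cast
            nlinarith
        · split_ifs with hc0
          · apply div_nonneg _ hβ0.le
            push_cast
            have : (2:ℝ) ≤ d := by exact_mod_cast hd2
            linarith
          · rw [le_div_iff₀ hβ0]
            have : (2:ℝ) ≤ d := by exact_mod_cast hd2
            nlinarith
    refine ⟨?_, habove⟩
    -- A' < B'
    rcases Nat.eq_zero_or_pos (kk (aSeq α β) (u ++ [d])) with hc'0 | hc'1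
    · rw [hc'0, if_pos rfl]
      exact tpos _
    · rw [if_neg (by omega)]
      -- c' ≥ 1: either d = 0 (c' = 1) or d = 1 ∧ c ≥ 1
      rcases Nat.eq_zero_or_pos d with hdz | hdpos
      · subst hdz
        have hcz := hd0 rfl
        by_cases hdr : (0:ℕ) = b r
        · rw [rrun_snoc, if_pos hdr]
          have : tOrb α β b (r + 1) = β * tOrb α β b r + α - b r := rfl
          rw [this, ← hdr]
          push_cast
          nlinarith [tpos r]
        · rw [rrun_snoc, if_neg hdr]
          show α < tOrb α β b 0
          norm_num [tOrb]
          linarith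
      · rcases Nat.lt_or_ge d 2 with hd1 | hd2
        · have hde : d = 1 := by omega
          subst hde
          rcases Nat.eq_zero_or_pos c with hcz | hc1
          · rw [kk_a_snoc_one' hβ hα hcz] at hc'1
            omega
          · -- c ≥ 1 : A = α < tOrb r
            have hαlt : α < tOrb α β b r := by
              rw [if_neg (by omega)] at hAB
              exact hAB
            by_cases hdr : (1:ℕ) = b r
            · rw [rrun_snoc, if_pos hdr]
              have : tOrb α β b (r + 1) = β * tOrb α β b r + α - b r := rfl
              rw [this, ← hdr]
              push_cast
              nlinarith
            · rw [rrun_snoc, if_neg hdr]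
              show α < tOrb α β b 0
              norm_num [tOrb]
              linarith
        · rw [kk_a_snoc_ge2 hβ hα hd2] at hc'1
          omega

lemma lang_of_adm (hβ : 3 < β) (hα : α = 1/β)
    (hb : Tendsto (iSeq α β) (𝓝[<] (1 : ℝ)) (𝓝 b))
    {w : List ℕ} (hADM : ADM α β b w) : w ∈ Lang α β := by
  obtain ⟨hAB, hreal⟩ := realize hβ hα hb w hADM
  obtain ⟨x, hx, -, hdig⟩ := hreal _ (le_refl _) hAB
  refine ⟨iSeq α β x, subset_closure ⟨x, hx, rfl⟩, 0, ?_⟩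
  apply List.ext_getElem
  · rw [length_wordN]
  · intro n h1 h2
    rw [length_wordN] at h2
    have e1 : w[n] = w.getD n 0 := (List.getD_eq_getElem _ _ _).symm
    have e2 : (wordN (iSeq α β x) 0 w.length)[n] =
        (wordN (iSeq α β x) 0 w.length).getD n 0 := (List.getD_eq_getElem _ _ _).symm
    rw [e1, e2, wordN_getD h2, Nat.zero_add, hdig n h2]

end Stmt6S

section Stmt6H

variable {α β : ℝ} {b : ℕ → ℕ} {s : ℕ → ℕ} {w u v : List ℕ} {i j k m : ℕ}

lemma getD_append' (v1 v2 : List ℕ) (i : ℕ) :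
    (v1 ++ v2).getD i 0 = if i < v1.length then v1.getD i 0 else v2.getD (i - v1.length) 0 := by
  rw [List.getD_eq_getElem?_getD, List.getElem?_append]
  split_ifs with h
  · rw [← List.getD_eq_getElem?_getD]
  · rw [← List.getD_eq_getElem?_getD]

lemma getD_set' (l : List ℕ) (j a i : ℕ) :
    (l.set j a).getD i 0 = if j = i ∧ j < l.length then a else l.getD i 0 := by
  by_cases h1 : j = i
  · subst h1
    by_cases h2 : j < l.length
    · rw [if_pos ⟨rfl, h2⟩, List.getD_eq_getElem?_getD, List.getElem?_set, if_pos rfl,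
        if_pos h2]
      rfl
    · rw [if_neg (by tauto), List.getD_eq_getElem?_getD, List.getElem?_set, if_pos rfl,
        if_neg h2, List.getD_eq_default _ _ (by omega)]
      rfl
  · rw [if_neg (by tauto), List.getD_eq_getElem?_getD, List.getElem?_set, if_neg h1,
      ← List.getD_eq_getElem?_getD]

lemma take_pre (h : j ≤ m) : (pre s m).take j = pre s j := by
  unfold pre
  rw [← List.map_take, List.take_range, min_eq_left h]

lemma pre_succ (s : ℕ → ℕ) (m : ℕ) : pre s (m+1) = pre s m ++ [s m] := by
  unfold pre
  rw [List.range_succ, List.map_append]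
  rfl

lemma dropLast_pre (hm : 1 ≤ m) : (pre s m).dropLast = pre s (m-1) := by
  obtain ⟨m', rfl⟩ : ∃ m', m = m' + 1 := ⟨m - 1, by omega⟩
  rw [pre_succ, List.dropLast_concat]
  norm_num

lemma getLast?_pre (hm : 1 ≤ m) : (pre s m).getLast? = some (s (m-1)) := by
  obtain ⟨m', rfl⟩ : ∃ m', m = m' + 1 := ⟨m - 1, by omega⟩
  rw [pre_succ, List.getLast?_concat]
  norm_num

lemma pre_ne_nil (hm : 1 ≤ m) : pre s m ≠ [] := by
  intro h
  have := length_pre s m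
  rw [h] at this
  simp at this
  omega

/-- match at an interior position -/
def MAt (s : ℕ → ℕ) (w : List ℕ) (i k : ℕ) : Prop :=
  k ≤ i ∧ ∀ t, t < k → w.getD (i - k + t) 0 = s t

lemma msuf_iff_mat : Msuf s k w ↔ MAt s w w.length k := Iff.rfl

lemma msuf_take_iff (hi : i ≤ w.length) : Msuf s k (w.take i) ↔ MAt s w i k := by
  unfold Msuf MAt
  rw [length_take_of_le hi]
  constructor
  · intro ⟨h1, h2⟩
    refine ⟨h1, fun t ht => ?_⟩
    have := h2 t ht
    rwa [getD_take' w (by omega)] at this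
  · intro ⟨h1, h2⟩
    refine ⟨h1, fun t ht => ?_⟩
    rw [getD_take' w (by omega)]
    exact h2 t ht

lemma adm_iff' : ADM α β b w ↔ ∀ i, i < w.length →
    ((w.getD i 0 = 0 → ∀ k, 1 ≤ k → ¬ MAt (aSeq α β) w i k) ∧
     (∀ k, MAt b w i k → w.getD i 0 ≤ b k)) := by
  unfold ADM
  constructor
  · intro h i hi
    obtain ⟨h1, h2⟩ := h i hi
    constructor
    · intro h0 k hk hM
      exact h1 h0 k hk ((msuf_take_iff hi.le).mpr hM)
    · intro k hM
      exact h2 k ((msuf_take_iff hi.le).mpr hM)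
  · intro h i hi
    obtain ⟨h1, h2⟩ := h i hi
    constructor
    · intro h0 k hk hM
      exact h1 h0 k hk ((msuf_take_iff hi.le).mp hM)
    · intro k hM
      exact h2 k ((msuf_take_iff hi.le).mp hM)

lemma kk_eq_zero_iff_mat : kk s w = 0 ↔ ∀ k, 1 ≤ k → ¬ MAt s w w.length k := by
  rw [kk_eq_zero_iff]
  constructor
  · intro h k hk hM
    exact h k hk (msuf_iff_mat.mpr hM)
  · intro h k hk hM
    exact h k hk (msuf_iff_mat.mp hM)

lemma lamNat_eq (hβ : 3 < β) (hα : α = 1/β)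
    (hb : Tendsto (iSeq α β) (𝓝[<] (1 : ℝ)) (𝓝 b)) : lamNat α β = b 0 := by
  have h := b_ceil hβ hα hb 0
  have ht : tOrb α β b 0 = 1 := rfl
  rw [ht, mul_one] at h
  unfold lamNat
  rw [add_comm]
  omega

end Stmt6H

section Stmt6W

variable {α β : ℝ} {b : ℕ → ℕ}

lemma lemW (hβ : 3 < β) (hα : α = 1/β)
    (hb : Tendsto (iSeq α β) (𝓝[<] (1 : ℝ)) (𝓝 b))
    {v : List ℕ} (hv : ADM α β b v) {m : ℕ} (hm : Msuf b m v)
    (hm1 : 1 ≤ m) (hm3 : b (m-1) < 3) {g : ℕ}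
    (hg : g = kk (aSeq α β) (pre b (m-1))) {vt : List ℕ}
    (hvt : vt = v.take (v.length - m) ++
      (((pre b m).set (m - g - 2) (b (m-g-2) - 1)).set (m - g - 1) (b 0 - 1))) :
    ADM α β b vt ∧ kk (aSeq α β) vt = 0 ∧ kk b vt = 0 := by
  have hb0 := b0_ge_3 hβ hα hb
  set L := v.length with hL
  have hmL : m ≤ L := hm.1
  have hvv : ∀ t, t < m → v.getD (L - m + t) 0 = b t := hm.2
  -- m ≥ 2
  have hm2 : 2 ≤ m := by
    rcases Nat.lt_or_ge m 2 with h | h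
    · exfalso
      have hm1' : m = 1 := by omega
      rw [hm1'] at hm3
      norm_num at hm3
      omega
    · exact h
  -- the a-match inside pre b (m-1)
  have hgm : Msuf (aSeq α β) g (pre b (m-1)) := hg ▸ msuf_kk _ _
  have hgle : g ≤ m - 1 := by
    have := hgm.1
    rwa [length_pre] at this
  -- letters of the a-match, in terms of b
  have hbpat : ∀ t, t < g → b (m - 1 - g + t) = aSeq α β t := by
    intro t ht
    have := hgm.2 t ht
    rw [length_pre, getD_pre (by omega)] at this
    exact this
  -- g ≤ m - 2
  have hgle2 : g ≤ m - 2 := by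
    by_contra h
    have hgeq : g = m - 1 := by omega
    have hg1 : 1 ≤ g := by omega
    have := hbpat 0 (by omega)
    rw [aSeq_zero hβ hα] at this
    have h0 : b 0 = 0 := by
      have e : m - 1 - g + 0 = 0 := by omega
      rwa [e] at this
    omega
  have hadm_m : ADM α β b (pre b m) := adm_preb hβ hα hb m
  -- step 2: zero and ones
  have hzero : 1 ≤ g → b (m - g - 1) = 0 := by
    intro hg1
    have := hbpat 0 (by omega)
    rw [aSeq_zero hβ hα] at this
    have e : m - 1 - g + 0 = m - g - 1 := by omega
    rwa [e] at this
  have hones : ∀ t, 1 ≤ t → t < g → b (m - 1 - g + t) = 1 := by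
    intro t h1 h2
    have := hbpat t h2
    rwa [aSeq_one hβ hα h1] at this
  -- step 3 : g ≥ 1 → b (m-1) ≥ 1
  have hbm1 : 1 ≤ g → 1 ≤ b (m-1) := by
    intro hg1
    by_contra h0
    push_neg at h0
    have hb1 : b (m-1) = 0 := by omega
    have hADMm := (adm_iff'.mp hadm_m) (m-1) (by rw [length_pre]; omega)
    have hlett : (pre b m).getD (m-1) 0 = 0 := by rw [getD_pre (by omega), hb1]
    have hMat : MAt (aSeq α β) (pre b m) (m-1) g := by
      refine ⟨by omega, fun t ht => ?_⟩
      rw [getD_pre (by omega)]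
      exact hbpat t ht
    exact hADMm.1 hlett g (by omega) hMat
  -- step 4 : c ≥ 1
  set c := b (m - g - 2) with hcdef
  have hc1 : 1 ≤ c := by
    by_contra h0
    push_neg at h0
    have hc0 : b (m - g - 2) = 0 := by omega
    rcases Nat.eq_zero_or_pos g with hg0 | hg1
    · -- g = 0 : then b (m-2) = 0 gives an a-match in pre b (m-1), contradiction
      have hMat : Msuf (aSeq α β) 1 (pre b (m-1)) := by
        refine ⟨by rw [length_pre]; omega, fun t ht => ?_⟩
        have ht0 : t = 0 := by omega
        subst ht0
        rw [length_pre, getD_pre (by omega), aSeq_zero hβ hα]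
        have e : m - 1 - 1 + 0 = m - g - 2 := by omega
        rw [e]
        exact hc0
      have := le_kk hMat
      omega
    · -- g ≥ 1 : position m-g-1 has letter 0, forbidden a-match of length 1
      have hADMm := (adm_iff'.mp hadm_m) (m-g-1) (by rw [length_pre]; omega)
      have hlett : (pre b m).getD (m-g-1) 0 = 0 := by
        rw [getD_pre (by omega)]
        exact hzero hg1
      have hMat : MAt (aSeq α β) (pre b m) (m-g-1) 1 := by
        refine ⟨by omega, fun t ht => ?_⟩
        have ht0 : t = 0 := by omega
        subst ht0
        rw [getD_pre (by omega), aSeq_zero hβ hα]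
        have e : m - g - 1 - 1 + 0 = m - g - 2 := by omega
        rw [e]
        exact hc0
      exact hADMm.1 hlett 1 (by omega) hMat
  -- length of vt
  have hlen : vt.length = L := by
    rw [hvt, List.length_append, List.length_set, List.length_set, length_pre,
      length_take_of_le (by omega)]
    omega
  -- getD description of vt
  have hgetD : ∀ i, i < L → vt.getD i 0 =
      if i = L - g - 2 then c - 1
      else if i = L - g - 1 then b 0 - 1
      else v.getD i 0 := by
    intro i hi
    rw [hvt, getD_append', length_take_of_le (by omega)]
    by_cases h1 : i < L - m
    · rw [if_pos h1, getD_take' v h1, if_neg (by omega), if_neg (by omega)]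
    · rw [if_neg h1]
      set j := i - (L - m) with hj
      have hjm : j < m := by omega
      have hlen1 : ((pre b m).set (m-g-2) (c-1)).length = m := by
        rw [List.length_set, length_pre]
      rw [getD_set', hlen1, getD_set']
      by_cases h2 : i = L - g - 1
      · rw [if_pos (by constructor <;> omega), if_neg (by omega), if_pos h2]
      · rw [if_neg (by omega)]
        by_cases h3 : i = L - g - 2
        · rw [if_pos (by rw [length_pre]; constructor <;> omega), if_pos h3]
        · rw [if_neg (by rw [length_pre]; omega), if_neg h3, if_neg h2, getD_pre hjm]
          have := hvv j hjm
          have e : L - m + j = i := by omega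
          rw [e] at this
          exact this.symm
  -- key contradiction engine
  have hkey : ∀ t', 1 ≤ t' → MAt b v (L - g - 2) t' → b t' ≠ c - 1 := by
    intro t' ht' hMat heq
    have hADMv := (adm_iff'.mp hv) (L - g - 2) (by omega)
    have := hADMv.2 t' hMat
    have hlv : v.getD (L - g - 2) 0 = c := by
      have := hvv (m - g - 2) (by omega)
      have e : L - m + (m - g - 2) = L - g - 2 := by omega
      rwa [e] at this
    rw [hlv, heq] at this
    omega
  -- interior positions agree with v
  have htr : ∀ (s : ℕ → ℕ) (k i' : ℕ), i' ≤ L - g - 2 →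
      (MAt s vt i' k ↔ MAt s v i' k) := by
    intro s k i' hi'
    unfold MAt
    constructor
    · intro ⟨h1, h2⟩
      refine ⟨h1, fun t ht => ?_⟩
      have := h2 t ht
      rwa [hgetD _ (by omega), if_neg (by omega), if_neg (by omega)] at this
    · intro ⟨h1, h2⟩
      refine ⟨h1, fun t ht => ?_⟩
      rw [hgetD _ (by omega), if_neg (by omega), if_neg (by omega)]
      exact h2 t ht
  -- values of letters in the tail region [L-g, L-1]
  have htail : ∀ i, L - g - 1 < i → i < L → vt.getD i 0 = b (i - (L - m)) ∧
      1 ≤ b (i - (L - m)) ∧ b (i - (L - m)) ≤ 2 := by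
    intro i h1 h2
    have hg1 : 1 ≤ g := by omega
    set tI := i - (L - m) with htI
    have htIr : m - g ≤ tI ∧ tI ≤ m - 1 := by omega
    have hval : vt.getD i 0 = b tI := by
      rw [hgetD _ h2, if_neg (by omega), if_neg (by omega)]
      have := hvv tI (by omega)
      have e : L - m + tI = i := by omega
      rwa [e] at this
    refine ⟨hval, ?_, ?_⟩
    · rcases Nat.eq_or_lt_of_le htIr.2 with he | hlt
      · rw [he]; exact hbm1 hg1
      · have := hones (tI - (m - 1 - g)) (by omega) (by omega)
        have e : m - 1 - g + (tI - (m - 1 - g)) = tI := by omega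
        rw [e] at this
        omega
    · rcases Nat.eq_or_lt_of_le htIr.2 with he | hlt
      · rw [he]; omega
      · have := hones (tI - (m - 1 - g)) (by omega) (by omega)
        have e : m - 1 - g + (tI - (m - 1 - g)) = tI := by omega
        rw [e] at this
        omega
  -- GOAL 2 : kk a vt = 0
  have goal2 : kk (aSeq α β) vt = 0 := by
    rw [kk_eq_zero_iff_mat, hlen]
    intro k hk hM
    obtain ⟨hkL, hMk⟩ := hM
    -- the last letter
    have hlast := hMk (k-1) (by omega)
    have elast : L - k + (k - 1) = L - 1 := by omega
    rw [elast] at hlast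
    have haval : aSeq α β (k-1) ≤ 1 := by
      rcases Nat.eq_zero_or_pos (k-1) with h | h
      · rw [h, aSeq_zero hβ hα]; omega
      · rw [aSeq_one hβ hα h]
    rcases Nat.eq_zero_or_pos g with hg0 | hg1
    · -- g = 0 : last letter is b 0 - 1 ≥ 2
      have : vt.getD (L-1) 0 = b 0 - 1 := by
        rw [hgetD _ (by omega), if_neg (by omega), if_pos (by omega)]
      rw [this] at hlast
      omega
    · -- g ≥ 1 : last letter is b (m-1) ∈ {1,2}
      have hlv : vt.getD (L-1) 0 = b (m-1) := by
        have := (htail (L-1) (by omega) (by omega)).1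
        have e : L - 1 - (L - m) = m - 1 := by omega
        rwa [e] at this
      rw [hlv] at hlast
      have hbm1v := hbm1 hg1
      rcases Nat.lt_or_ge (b (m-1)) 2 with h1 | h2
      · -- b (m-1) = 1, so aSeq (k-1) = 1, k ≥ 2
        have hbm1e : b (m-1) = 1 := by omega
        have hk2 : 2 ≤ k := by
          by_contra h
          have hk1 : k = 1 := by omega
          rw [hk1] at hlast
          simp only [Nat.sub_self] at hlast
          rw [aSeq_zero hβ hα] at hlast
          omega
        rcases Nat.lt_or_ge k (g+1) with hcase | hcase
        · -- k ≤ g : position L-k has letter 1 ≠ 0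
          have h0 := hMk 0 (by omega)
          rw [Nat.add_zero, aSeq_zero hβ hα] at h0
          have : vt.getD (L-k) 0 = b (m-k) := by
            have := (htail (L-k) (by omega) (by omega)).1
            have e : L - k - (L - m) = m - k := by omega
            rwa [e] at this
          rw [this] at h0
          have := hones (g - k + 1) (by omega) (by omega)
          have e : m - 1 - g + (g - k + 1) = m - k := by omega
          rw [e] at this
          omega
        · rcases Nat.eq_or_lt_of_le hcase with hke | hke
          · -- k = g + 1 : position L-k = L-g-1 has letter b0-1 ≥ 2 ≠ 0
            have h0 := hMk 0 (by omega)
            rw [Nat.add_zero, aSeq_zero hβ hα] at h0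
            have : vt.getD (L-k) 0 = b 0 - 1 := by
              rw [hgetD _ (by omega), if_neg (by omega), if_pos (by omega)]
            rw [this] at h0
            omega
          · -- k ≥ g + 2 : interior position L-g-1 should be 1 but is b0-1 ≥ 2
            have ht1 := hMk (k - g - 1) (by omega)
            have e : L - k + (k - g - 1) = L - g - 1 := by omega
            rw [e, aSeq_one hβ hα (by omega)] at ht1
            have : vt.getD (L-g-1) 0 = b 0 - 1 := by
              rw [hgetD _ (by omega), if_neg (by omega), if_pos rfl]
            rw [this] at ht1
            omega
      · rw [aSeq_one hβ hα (by omega)] at hlast <;> omega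
  -- GOAL 3 : kk b vt = 0
  have goal3 : kk b vt = 0 := by
    rw [kk_eq_zero_iff_mat, hlen]
    intro j hj hM
    obtain ⟨hjL, hMj⟩ := hM
    have h0 := hMj 0 (by omega)
    rw [Nat.add_zero] at h0
    rcases Nat.lt_or_ge j (g+1) with hcase | hcase
    · -- 1 ≤ j ≤ g (so g ≥ 1)
      have hg1 : 1 ≤ g := by omega
      have : vt.getD (L-j) 0 = b (m-j) ∧ 1 ≤ b (m-j) ∧ b (m-j) ≤ 2 := by
        have := htail (L-j) (by omega) (by omega)
        have e : L - j - (L - m) = m - j := by omega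
        rwa [e] at this
      rw [this.1] at h0
      have := this.2.2
      omega
    · rcases Nat.eq_or_lt_of_le hcase with hje | hje
      · -- j = g+1 : first letter is b0-1 ≠ b0
        have : vt.getD (L-j) 0 = b 0 - 1 := by
          rw [hgetD _ (by omega), if_neg (by omega), if_pos (by omega)]
        rw [this] at h0
        omega
      · rcases Nat.eq_or_lt_of_le hje with hje2 | hje2
        · -- j = g+2 : first letter is c-1 = b0 impossible since c ≤ b0
          have : vt.getD (L-j) 0 = c - 1 := by
            rw [hgetD _ (by omega), if_pos (by omega)]
          rw [this] at h0
          have := b_le_b0 hβ hα hb (m - g - 2)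
          omega
        · -- j ≥ g+3
          have ht0 := hMj (j - g - 2) (by omega)
          have e : L - j + (j - g - 2) = L - g - 2 := by omega
          rw [e] at ht0
          have hcc : vt.getD (L-g-2) 0 = c - 1 := by
            rw [hgetD _ (by omega), if_pos rfl]
          rw [hcc] at ht0
          have hMat : MAt b v (L - g - 2) (j - g - 2) := by
            refine ⟨by omega, fun t ht => ?_⟩
            have := hMj t (by omega)
            rw [show L - j + t = L - g - 2 - (j - g - 2) + t by omega] at this
            rw [← this, hgetD _ (by omega), if_neg (by omega), if_neg (by omega)]
          exact hkey (j - g - 2) (by omega) hMat ht0.symm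
  -- GOAL 1 : ADM vt
  have goal1 : ADM α β b vt := by
    rw [adm_iff', hlen]
    intro i hi
    rcases Nat.lt_or_ge i (L - g - 2) with hcase | hcase
    · -- untouched prefix
      have hADMv := (adm_iff'.mp hv) i (by omega)
      have hlett : vt.getD i 0 = v.getD i 0 := by
        rw [hgetD _ (by omega), if_neg (by omega), if_neg (by omega)]
      constructor
      · intro h0 k hk hM
        rw [hlett] at h0
        exact hADMv.1 h0 k hk ((htr _ k i (by omega)).mp hM)
      · intro k hM
        rw [hlett]
        exact hADMv.2 k ((htr _ k i (by omega)).mp hM)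
    · rcases Nat.eq_or_lt_of_le hcase with hc2 | hc3
      · -- i = L-g-2
        have hlett : vt.getD i 0 = c - 1 := by
          rw [hgetD _ (by omega), if_pos (by omega)]
        constructor
        · intro h0 k hk hM
          have hceq : c = 1 := by rw [hlett] at h0; omega
          have hMv : MAt (aSeq α β) v (L-g-2) k := by
            rw [hc2]
            exact (htr _ k i (by omega)).mp hM
          -- extend by the letter c = 1
          have hkle2 := hMv.1
          have hMext : MAt (aSeq α β) v (L-g-1) (k+1) := by
            refine ⟨by omega, fun t ht => ?_⟩
            rcases Nat.lt_or_ge t k with h' | h'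
            · have := hMv.2 t h'
              rwa [show L - g - 1 - (k+1) + t = L - g - 2 - k + t by omega]
            · have ht' : t = k := by omega
              rw [ht']
              rw [show L - g - 1 - (k+1) + k = L - g - 2 by omega]
              have hlv : v.getD (L - g - 2) 0 = c := by
                have := hvv (m - g - 2) (by omega)
                have e : L - m + (m - g - 2) = L - g - 2 := by omega
                rwa [e] at this
              rw [hlv, hceq, aSeq_one hβ hα (by omega)]
          rcases Nat.eq_zero_or_pos g with hg0 | hg1
          · -- g = 0 : use the transfer lemma at position L-1
            have hMsufb : Msuf b (m-1) (v.take (L-1)) := by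
              rw [msuf_take_iff (by omega)]
              refine ⟨by omega, fun t ht => ?_⟩
              have := hvv t (by omega)
              rwa [show L - 1 - (m-1) + t = L - m + t by omega]
            have hkkt := kk_a_transfer hβ hα hb hMsufb (by omega)
            rw [← hg, hg0] at hkkt
            have hMsufa : Msuf (aSeq α β) (k+1) (v.take (L-1)) := by
              rw [msuf_take_iff (by omega)]
              rw [show L - 1 = L - g - 1 by omega]
              exact hMext
            have := le_kk hMsufa
            omega
          · -- g ≥ 1 : position L-g-1 of v has letter 0
            have hADMv := (adm_iff'.mp hv) (L-g-1) (by omega)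
            have hlv0 : v.getD (L-g-1) 0 = 0 := by
              have := hvv (m - g - 1) (by omega)
              have e : L - m + (m - g - 1) = L - g - 1 := by omega
              rw [e] at this
              rw [this]
              exact hzero hg1
            exact hADMv.1 hlv0 (k+1) (by omega) hMext
        · intro k hM
          have hMv : MAt b v (L-g-2) k := by
            rw [hc2]
            exact (htr _ k i (by omega)).mp hM
          have hADMv := (adm_iff'.mp hv) (L-g-2) (by omega)
          have := hADMv.2 k hMv
          have hlv : v.getD (L - g - 2) 0 = c := by
            have := hvv (m - g - 2) (by omega)
            have e : L - m + (m - g - 2) = L - g - 2 := by omega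
            rwa [e] at this
          rw [hlv] at this
          rw [hlett]
          omega
      · rcases Nat.eq_or_lt_of_le hc3 with hc4 | hc5
        · -- i = L-g-1
          have hlett : vt.getD i 0 = b 0 - 1 := by
            rw [hgetD _ (by omega), if_neg (by omega), if_pos (by omega)]
          constructor
          · intro h0
            rw [hlett] at h0
            omega
          · intro k hM
            rcases Nat.eq_zero_or_pos k with hk0 | hk1
            · rw [hlett, hk0]; omega
            · exfalso
              obtain ⟨hkle, hMk⟩ := hM
              have ht := hMk (k-1) (by omega)
              rw [show i - k + (k-1) = L - g - 2 by omega] at ht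
              have hcc : vt.getD (L-g-2) 0 = c - 1 := by
                rw [hgetD _ (by omega), if_pos rfl]
              rw [hcc] at ht
              rcases Nat.eq_or_lt_of_le hk1 with hk1e | hk2
              · -- k = 1 : b 0 = c - 1 impossible
                have := b_le_b0 hβ hα hb (m-g-2)
                rw [← hk1e] at ht
                simp only [Nat.sub_self] at ht
                omega
              · have hMat : MAt b v (L-g-2) (k-1) := by
                  refine ⟨by omega, fun t htk => ?_⟩
                  have := hMk t (by omega)
                  rw [show i - k + t = L - g - 2 - (k-1) + t by omega] at this
                  rw [← this, hgetD _ (by omega), if_neg (by omega), if_neg (by omega)]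
                exact hkey (k-1) (by omega) hMat ht.symm
        · -- i > L-g-1 (so g ≥ 1)
          have hti := htail i (by omega) hi
          constructor
          · intro h0
            rw [hti.1] at h0
            omega
          · intro k hM
            rcases Nat.eq_zero_or_pos k with hk0 | hk1
            · rw [hti.1, hk0]
              omega
            · exfalso
              obtain ⟨hkle, hMk⟩ := hM
              have ht0 := hMk 0 (by omega)
              rw [Nat.add_zero] at ht0
              -- position i - k carries letter b 0 ≥ 3
              rcases Nat.lt_or_ge (i - k) (L - g - 2) with hp | hp
              · -- interior reset : hits position L-g-2 inside
                set t' := L - g - 2 - (i - k) with ht'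
                have htt := hMk t' (by omega)
                rw [show i - k + t' = L - g - 2 by omega] at htt
                have hcc : vt.getD (L-g-2) 0 = c - 1 := by
                  rw [hgetD _ (by omega), if_pos rfl]
                rw [hcc] at htt
                rcases Nat.eq_zero_or_pos t' with ht'0 | ht'1
                · -- t' = 0 impossible since i - k < L-g-2
                  omega
                · have hMat : MAt b v (L-g-2) t' := by
                    refine ⟨by omega, fun t htk => ?_⟩
                    have := hMk t (by omega)
                    rw [show i - k + t = L - g - 2 - t' + t by omega] at this
                    rw [← this, hgetD _ (by omega), if_neg (by omega), if_neg (by omega)]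
                  exact hkey t' ht'1 hMat htt.symm
              · rcases Nat.eq_or_lt_of_le hp with hp2 | hp3
                · -- i - k = L-g-2 : letter c-1 < b0
                  have hcc : vt.getD (i-k) 0 = c - 1 := by
                    rw [hgetD _ (by omega), if_pos (by omega)]
                  rw [hcc] at ht0
                  have := b_le_b0 hβ hα hb (m-g-2)
                  omega
                · rcases Nat.eq_or_lt_of_le hp3 with hp4 | hp5
                  · -- i - k = L-g-1 : letter b0-1 ≠ b0
                    have hcc : vt.getD (i-k) 0 = b 0 - 1 := by
                      rw [hgetD _ (by omega), if_neg (by omega), if_pos (by omega)]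
                    rw [hcc] at ht0
                    omega
                  · -- i - k in tail region : letter ≤ 2 < 3
                    have := htail (i-k) (by omega) (by omega)
                    rw [this.1] at ht0
                    have := this.2.2
                    omega
  exact ⟨goal1, goal2, goal3⟩

end Stmt6W

section Stmt6CA

variable {α β : ℝ} {b : ℕ → ℕ} {w u v : List ℕ} {e m k : ℕ}

lemma take_append_of_le (h : k ≤ u.length) : (u ++ [e]).take k = u.take k := by
  rw [List.take_append]
  have : k - u.length = 0 := by omega
  rw [this]
  simp

lemma adm_snoc_intro (hu : ADM α β b u)
    (ha : e = 0 → ∀ k, 1 ≤ k → ¬ Msuf (aSeq α β) k u)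
    (hbd : ∀ k, Msuf b k u → e ≤ b k) : ADM α β b (u ++ [e]) := by
  intro j hj
  rw [List.length_append, List.length_singleton] at hj
  rcases Nat.lt_or_ge j u.length with h' | h'
  · rw [getD_snoc_lt h', take_append_of_le h'.le]
    exact hu j h'
  · have hj' : j = u.length := by omega
    subst hj'
    rw [getD_snoc_last, List.take_left]
    exact ⟨fun h0 => ha h0, fun k hM => hbd k hM⟩

lemma kk_eq_imp_zero (hβ : 3 < β) (hα : α = 1/β)
    (hb : Tendsto (iSeq α β) (𝓝[<] (1 : ℝ)) (𝓝 b))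
    (h : kk (aSeq α β) w = kk b w) : kk (aSeq α β) w = 0 := by
  by_contra h0
  have hc1 : 1 ≤ kk (aSeq α β) w := by omega
  have hma := msuf_kk (aSeq α β) w
  have hmb : Msuf b (kk (aSeq α β) w) w := by rw [h]; exact msuf_kk b w
  have h1 := hma.2 0 (by omega)
  have h2 := hmb.2 0 (by omega)
  rw [h1, aSeq_zero hβ hα] at h2
  have := b0_ge_3 hβ hα hb
  omega

lemma take_append_pre {s : ℕ → ℕ} {k' : ℕ} (hm : Msuf s k w) (hk' : k' ≤ k) :
    w.take (w.length - k) ++ pre s k' = w.take (w.length - k + k') := by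
  have hkL := hm.1
  apply List.ext_getElem
  · rw [List.length_append, length_take_of_le (by omega), length_pre,
      length_take_of_le (by omega)]
  · intro n h1 h2
    rw [List.length_append, length_take_of_le (by omega), length_pre] at h1
    have e2 : (w.take (w.length - k + k'))[n] = w.getD n 0 := by
      rw [← List.getD_eq_getElem _ 0 h2, getD_take' w (by
        rw [length_take_of_le (by omega)] at h2; omega)]
    rw [e2]
    have e1 : (w.take (w.length - k) ++ pre s k')[n] =
        (w.take (w.length - k) ++ pre s k').getD n 0 := (List.getD_eq_getElem _ _ _).symm
    rw [e1, getD_append', length_take_of_le (by omega)]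
    split_ifs with h3
    · rw [getD_take' w h3]
    · rw [getD_pre (by omega)]
      have := hm.2 (n - (w.length - k)) (by omega)
      rw [show w.length - k + (n - (w.length - k)) = n by omega] at this
      exact this.symm

/-- Case B3 : the suffix is a b-prefix ending in a letter ≥ 3. -/
lemma caseB3 (hβ : 3 < β) (hα : α = 1/β)
    (hb : Tendsto (iSeq α β) (𝓝[<] (1 : ℝ)) (𝓝 b))
    (hw : ADM α β b w) (hm : Msuf b m w) (hm1 : 1 ≤ m) (hm3 : 3 ≤ b (m-1)) :
    ADM α β b (w.take (w.length - 1) ++ [b (m-1) - 1]) ∧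
    kk (aSeq α β) (w.take (w.length - 1) ++ [b (m-1) - 1]) = 0 ∧
    kk b (w.take (w.length - 1) ++ [b (m-1) - 1]) = 0 := by
  set L := w.length with hL
  have hmL : m ≤ L := hm.1
  have hlast : w.getD (L-1) 0 = b (m-1) := by
    have := hm.2 (m-1) (by omega)
    rwa [show L - m + (m-1) = L - 1 by omega] at this
  have hlen' : (w.take (L-1)).length = L - 1 := length_take_of_le (by omega)
  have hADM1 : ∀ k, MAt b w (L-1) k → b (m-1) ≤ b k := by
    intro k hM
    have := ((adm_iff'.mp hw) (L-1) (by omega)).2 k hM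
    rwa [hlast] at this
  refine ⟨?_, ?_, ?_⟩
  · apply adm_snoc_intro (adm_take hw (L-1))
    · intro h0
      omega
    · intro k hMk
      have hM : MAt b w (L-1) k := (msuf_take_iff (by omega)).mp hMk
      have := hADM1 k hM
      omega
  · exact kk_a_snoc_ge2 hβ hα (by omega)
  · rw [kk_eq_zero_iff]
    intro j hj hM
    obtain ⟨hM', hval⟩ := msuf_snoc_restrict hM hj
    rcases Nat.eq_or_lt_of_le hj with h1 | h2
    · have h1' : j - 1 = 0 := by omega
      rw [h1'] at hval
      have := b_le_b0 hβ hα hb (m-1)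
      omega
    · have hMat : MAt b w (L-1) (j-1) := (msuf_take_iff (by omega)).mp hM'
      have := hADM1 (j-1) hMat
      omega

/-- Case A : the suffix is an a-prefix. -/
lemma caseA (hβ : 3 < β) (hα : α = 1/β)
    (hb : Tendsto (iSeq α β) (𝓝[<] (1 : ℝ)) (𝓝 b))
    (hw : ADM α β b w) (hlt : kk b w < kk (aSeq α β) w) :
    ADM α β b (w.take (w.length - 1) ++ [w.getD (w.length - 1) 0 + 1]) ∧
    kk (aSeq α β) (w.take (w.length - 1) ++ [w.getD (w.length - 1) 0 + 1]) = 0 := by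
  have hb0 := b0_ge_3 hβ hα hb
  set L := w.length with hL
  set l := kk (aSeq α β) w with hldef
  have hl1 : 1 ≤ l := by omega
  have hma := msuf_kk (aSeq α β) w
  have hlL : l ≤ L := kk_le _ _
  have hd : w.getD (L-1) 0 = aSeq α β (l-1) := by
    have := hma.2 (l-1) (by omega)
    rwa [show L - l + (l-1) = L - 1 by omega] at this
  have hdle : w.getD (L-1) 0 ≤ 1 := by
    rw [hd]
    rcases Nat.eq_zero_or_pos (l-1) with h | h
    · rw [h, aSeq_zero hβ hα]; omega
    · rw [aSeq_one hβ hα h]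
  constructor
  · apply adm_snoc_intro (adm_take hw (L-1))
    · intro h0; omega
    · intro k hMk
      have hM : MAt b w (L-1) k := (msuf_take_iff (by omega)).mp hMk
      have hle := ((adm_iff'.mp hw) (L-1) (by omega)).2 k hM
      have hne : w.getD (L-1) 0 ≠ b k := by
        intro heq
        -- extend the match to all of w
        have hkle := hM.1
        have hMext : Msuf b (k+1) w := by
          rw [msuf_iff_mat]
          refine ⟨by omega, fun t ht => ?_⟩
          rcases Nat.lt_or_ge t k with h' | h'
          · have := hM.2 t h'
            rwa [show L - (k+1) + t = L - 1 - k + t by omega]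
          · have ht' : t = k := by omega
            rw [ht', show L - (k+1) + k = L - 1 by omega, heq]
        have hkk := le_kk hMext
        -- so k + 1 ≤ kk b w < l
        rcases Nat.eq_zero_or_pos k with hk0 | hk1
        · rw [hk0] at heq
          omega
        · have ht0 := hM.2 0 (by omega)
          rw [Nat.add_zero] at ht0
          -- position L-1-k is inside the a-suffix, letter ≤ 1
          have : w.getD (L-1-k) 0 = aSeq α β (l-1-k) := by
            have := hma.2 (l-1-k) (by omega)
            rwa [show L - l + (l-1-k) = L - 1 - k by omega] at this
          rw [this, aSeq_one hβ hα (by omega)] at ht0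
          omega
      omega
  · rcases Nat.eq_or_lt_of_le hl1 with h1 | h2
    · -- l = 1 : last letter is 0, becomes 1
      have hd0 : w.getD (L-1) 0 = 0 := by
        rw [hd, ← h1]
        simp [aSeq_zero hβ hα]
      rw [hd0]
      apply kk_a_snoc_one' hβ hα
      rw [kk_eq_zero_iff]
      intro k hk hMk
      rw [msuf_take_iff (by omega)] at hMk
      exact ((adm_iff'.mp hw) (L-1) (by omega)).1 hd0 k hk hMk
    · -- l ≥ 2 : last letter is 1, becomes 2
      have hd1 : w.getD (L-1) 0 = 1 := by
        rw [hd, aSeq_one hβ hα (by omega)]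
      rw [hd1]
      exact kk_a_snoc_ge2 hβ hα (by omega)

end Stmt6CA

section Stmt6F

variable {α β : ℝ} {b : ℕ → ℕ} {w v : List ℕ} {m lam : ℕ}

lemma sWord_eps (h1 : kk (aSeq α β) v = 0) (h2 : kk b v = 0) :
    sWord (aSeq α β) b v = [] := by
  unfold sWord
  rw [h1, h2]
  simp

lemma hatW_eps (h1 : kk (aSeq α β) v = 0) (h2 : kk b v = 0) :
    hatW (aSeq α β) b lam v = v := by
  unfold hatW
  rw [sWord_eps h1 h2]
  simp [hatP]

lemma preb_not_pset_a (hβ : 3 < β) (hα : α = 1/β)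
    (hb : Tendsto (iSeq α β) (𝓝[<] (1 : ℝ)) (𝓝 b)) (hm1 : 1 ≤ m) :
    pre b m ∉ Pset (aSeq α β) := by
  rintro ⟨l', he⟩
  have hlen := congrArg List.length he
  rw [length_pre, length_pre] at hlen
  have h0 := congrArg (fun t : List ℕ => t.getD 0 0) he
  rw [getD_pre (by omega), getD_pre (by omega), aSeq_zero hβ hα] at h0
  have := b0_ge_3 hβ hα hb
  omega

lemma hatW_a (hβ : 3 < β) (hα : α = 1/β)
    (hb : Tendsto (iSeq α β) (𝓝[<] (1 : ℝ)) (𝓝 b))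
    (hlt : kk b w < kk (aSeq α β) w) :
    hatW (aSeq α β) b lam w = w.take (w.length - 1) ++ [w.getD (w.length - 1) 0 + 1] := by
  set l := kk (aSeq α β) w with hldef
  have hl1 : 1 ≤ l := by omega
  have hma := msuf_kk (aSeq α β) w
  have hlL : l ≤ w.length := kk_le _ _
  have hd : aSeq α β (l-1) = w.getD (w.length-1) 0 := by
    have := hma.2 (l-1) (by omega)
    rw [show w.length - l + (l-1) = w.length - 1 by omega] at this
    exact this.symm
  unfold hatW sWord
  rw [if_pos hlt]
  have hdrop : w.drop (w.length - l) = pre (aSeq α β) l := (msuf_iff_drop hlL).mpr hma.2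
  rw [hdrop, length_pre]
  unfold hatP
  have hmem : pre (aSeq α β) l ∈ Pset (aSeq α β) := ⟨l, rfl⟩
  rw [if_neg (pre_ne_nil hl1), if_pos hmem, dropLast_pre hl1, getLast?_pre hl1]
  simp only [Option.getD_some]
  rw [← List.append_assoc, take_append_pre hma (by omega), hd,
    show w.length - l + (l-1) = w.length - 1 by omega]

lemma hatW_b3 (hβ : 3 < β) (hα : α = 1/β)
    (hb : Tendsto (iSeq α β) (𝓝[<] (1 : ℝ)) (𝓝 b))
    (hlt : kk (aSeq α β) w < kk b w) (h3 : 3 ≤ b (kk b w - 1)) :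
    hatW (aSeq α β) b lam w = w.take (w.length - 1) ++ [b (kk b w - 1) - 1] := by
  set m := kk b w with hmdef
  have hm1 : 1 ≤ m := by omega
  have hm := msuf_kk b w
  have hmL : m ≤ w.length := kk_le _ _
  unfold hatW sWord
  rw [if_neg (by omega), if_pos hlt]
  rw [(msuf_iff_drop hmL).mpr hm.2, length_pre]
  unfold hatP
  rw [if_neg (pre_ne_nil hm1), if_neg (preb_not_pset_a hβ hα hb hm1),
    if_pos (show 3 ≤ (pre b m).getLast?.getD 0 by rw [getLast?_pre hm1]; simpa using h3),
    dropLast_pre hm1, getLast?_pre hm1]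
  simp only [Option.getD_some]
  rw [← List.append_assoc, take_append_pre hm (by omega),
    show w.length - m + (m-1) = w.length - 1 by omega]

lemma hatW_bw (hβ : 3 < β) (hα : α = 1/β)
    (hb : Tendsto (iSeq α β) (𝓝[<] (1 : ℝ)) (𝓝 b))
    (hlt : kk (aSeq α β) w < kk b w) (h3 : b (kk b w - 1) < 3) :
    hatW (aSeq α β) b (lamNat α β) w = w.take (w.length - kk b w) ++
      (((pre b (kk b w)).set (kk b w - kk (aSeq α β) (pre b (kk b w - 1)) - 2)
          (b (kk b w - kk (aSeq α β) (pre b (kk b w - 1)) - 2) - 1)).set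
        (kk b w - kk (aSeq α β) (pre b (kk b w - 1)) - 1) (b 0 - 1)) := by
  set m := kk b w with hmdef
  have hm1 : 1 ≤ m := by omega
  have hm := msuf_kk b w
  have hmL : m ≤ w.length := kk_le _ _
  unfold hatW sWord
  rw [if_neg (by omega), if_pos hlt]
  rw [(msuf_iff_drop hmL).mpr hm.2, length_pre]
  unfold hatP
  rw [if_neg (pre_ne_nil hm1), if_neg (preb_not_pset_a hβ hα hb hm1),
    if_neg (show ¬ 3 ≤ (pre b m).getLast?.getD 0 by rw [getLast?_pre hm1]; simpa using (by omega : ¬ 3 ≤ b (m-1))),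
    length_pre, dropLast_pre hm1, getD_pre (by omega), lamNat_eq hβ hα hb]

end Stmt6F


/-- for every word in the language, `w̃ ∈ L^{α,β}` and `s(w̃) = ε`
(equivalently `k1(w̃) = k2(w̃) = 0`). -/
theorem stmt6 (α β : ℝ) (hβ : 3 < β) (hα : α = 1 / β)
    (b : ℕ → ℕ) (hb : Tendsto (iSeq α β) (𝓝[<] (1 : ℝ)) (𝓝 b))
    (w : List ℕ) (hw : w ∈ Lang α β) :
    tildeW (aSeq α β) b (lamNat α β) w ∈ Lang α β ∧
    sWord (aSeq α β) b (tildeW (aSeq α β) b (lamNat α β) w) = [] ∧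
    kk (aSeq α β) (tildeW (aSeq α β) b (lamNat α β) w) = 0 ∧
    kk b (tildeW (aSeq α β) b (lamNat α β) w) = 0 := by
  have hADM := adm_of_lang hβ hα hb hw
  rcases lt_trichotomy (kk (aSeq α β) w) (kk b w) with hlt | heq | hgt
  · -- suffix is a b-prefix
    have hm1 : 1 ≤ kk b w := by omega
    have hm := msuf_kk b w
    rcases Nat.lt_or_ge (b (kk b w - 1)) 3 with h3 | h3
    · -- last letter < 3 : the special case
      have hhat := hatW_bw hβ hα hb hlt h3
      obtain ⟨hadm, hk0a, hk0b⟩ := lemW hβ hα hb hADM hm hm1 h3 rfl rfl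
      unfold tildeW
      rw [hhat, hatW_eps hk0a hk0b]
      exact ⟨lang_of_adm hβ hα hb hadm, sWord_eps hk0a hk0b, hk0a, hk0b⟩
    · -- last letter ≥ 3
      have hhat := hatW_b3 (lam := lamNat α β) hβ hα hb hlt h3
      obtain ⟨hadm, hk0a, hk0b⟩ := caseB3 hβ hα hb hADM hm hm1 h3
      unfold tildeW
      rw [hhat, hatW_eps hk0a hk0b]
      exact ⟨lang_of_adm hβ hα hb hadm, sWord_eps hk0a hk0b, hk0a, hk0b⟩
  · -- empty distinguished suffix
    have h0a := kk_eq_imp_zero hβ hα hb heq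
    have h0b : kk b w = 0 := by omega
    unfold tildeW
    rw [hatW_eps h0a h0b, hatW_eps h0a h0b]
    exact ⟨hw, sWord_eps h0a h0b, h0a, h0b⟩
  · -- suffix is an a-prefix
    have hl1 : 1 ≤ kk (aSeq α β) w := by omega
    have hL1 : 1 ≤ w.length := le_trans hl1 (kk_le (aSeq α β) w)
    obtain ⟨hadm1, hk0a1⟩ := caseA hβ hα hb hADM hgt
    have hhat1 := hatW_a (lam := lamNat α β) hβ hα hb hgt
    rcases Nat.eq_zero_or_pos
        (kk b (w.take (w.length - 1) ++ [w.getD (w.length - 1) 0 + 1])) with hk0b1 | hpos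
    · unfold tildeW
      rw [hhat1, hatW_eps hk0a1 hk0b1]
      exact ⟨lang_of_adm hβ hα hb hadm1, sWord_eps hk0a1 hk0b1, hk0a1, hk0b1⟩
    · set wh := w.take (w.length - 1) ++ [w.getD (w.length - 1) 0 + 1] with hwh
      have hm' := msuf_kk b wh
      have hm1' : 1 ≤ kk b wh := hpos
      have hlentake : (w.take (w.length - 1)).length = w.length - 1 :=
        length_take_of_le (by omega)
      have hlenwh : wh.length = w.length := by
        rw [hwh, List.length_append, List.length_singleton, hlentake]
        omega
      have hlast : wh.getD (wh.length - 1) 0 = w.getD (w.length - 1) 0 + 1 := by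
        have h := getD_snoc_last (w.take (w.length - 1)) (w.getD (w.length - 1) 0 + 1)
        rw [hlentake] at h
        rw [← hwh] at h
        rw [hlenwh]
        exact h
      -- the last letter of w is ≤ 1
      have hma := msuf_kk (aSeq α β) w
      have hdv := hma.2 (kk (aSeq α β) w - 1) (by omega)
      rw [show w.length - kk (aSeq α β) w + (kk (aSeq α β) w - 1) = w.length - 1 by
        (have := kk_le (aSeq α β) w; omega)] at hdv
      have hd : w.getD (w.length - 1) 0 ≤ 1 := by
        rw [hdv]
        rcases Nat.eq_zero_or_pos (kk (aSeq α β) w - 1) with h | h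
        · rw [h, aSeq_zero hβ hα]; omega
        · rw [aSeq_one hβ hα h]
      have h3' : b (kk b wh - 1) < 3 := by
        have hx := hm'.2 (kk b wh - 1) (by omega)
        rw [show wh.length - kk b wh + (kk b wh - 1) = wh.length - 1 by
          (have := hm'.1; omega)] at hx
        omega
      have hk0lt : kk (aSeq α β) wh < kk b wh := by rw [hk0a1]; omega
      have hhat2 := hatW_bw hβ hα hb hk0lt h3'
      obtain ⟨hadm2, hk0a2, hk0b2⟩ := lemW hβ hα hb hadm1 hm' hm1' h3' rfl rfl
      unfold tildeW
      rw [hhat1, hhat2]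
      exact ⟨lang_of_adm hβ hα hb hadm2, sWord_eps hk0a2 hk0b2, hk0a2, hk0b2⟩

end AB
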